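/- Let X be a nonempty set, T : X → X a map, 𝒦 a T-invariant set of gambles on X (f ∈ 𝒦 implies f∘T ∈ 𝒦), and let L : 𝒦 → ℝ be a weakly T-invariant lower prevision (L(f∘T) ≥ L(f) for all f ∈ 𝒦) that avoids sure loss. Let 𝓜(L) denote the set of coherent previsions Q on all gambles with Q(f) ≥ L(f) for all f ∈ 𝒦. Then the set of all T-invariant coherent previsions on X that dominate L on 𝒦 (coherent previsions P with P(f∘T) = P(f) for all gambles f and P ≥ L on 𝒦) equals { Q_B : Q ∈ 𝓜(L), B a Banach limit on ℕ }, where Q_B(f) := B(n ↦ Q(f∘T^n)). Consequently, the point-wise smallest strongly T-invariant coherent lower prevision on all gambles dominating L on 𝒦 is given, for every gamble f, by inf_{Q ∈ 𝓜(L)} sup_{n≥1} inf_{k≥0} (1/n) Σ_{ℓ=k}^{k+n−1} Q(f∘T^ℓ). -/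

import Mathlib

def IsGamble {X : Type*} (f : X → ℝ) : Prop :=
  BddAbove (Set.range f) ∧ BddBelow (Set.range f)

def IsCoherentLowerPrevision {X : Type*} (L : (X → ℝ) → ℝ) : Prop :=
  (∀ f : X → ℝ, IsGamble f → sInf (Set.range f) ≤ L f) ∧
  (∀ f g : X → ℝ, IsGamble f → IsGamble g → L f + L g ≤ L (f + g)) ∧
  (∀ f : X → ℝ, IsGamble f → ∀ c : ℝ, 0 ≤ c → L (c • f) = c * L f)

def IsCoherentPrevision {X : Type*} (P : (X → ℝ) → ℝ) : Prop :=
  (∀ f g : X → ℝ, IsGamble f → IsGamble g → P (f + g) = P f + P g) ∧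
  (∀ f : X → ℝ, IsGamble f → sInf (Set.range f) ≤ P f)

def IsTransformationMonoid {X : Type*} (𝒯 : Set (X → X)) : Prop :=
  id ∈ 𝒯 ∧ ∀ S ∈ 𝒯, ∀ T ∈ 𝒯, S ∘ T ∈ 𝒯

def Dominating {X : Type*} (L : (X → ℝ) → ℝ) : Set ((X → ℝ) → ℝ) :=
  {P | IsCoherentPrevision P ∧ ∀ f : X → ℝ, IsGamble f → L f ≤ P f}

def AvoidsSureLoss {X : Type*} (𝒦 : Set (X → ℝ)) (L : (X → ℝ) → ℝ) : Prop :=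
  ∀ (n : ℕ) (lam : Fin n → ℝ) (fs : Fin n → X → ℝ),
    (∀ k, 0 ≤ lam k) → (∀ k, fs k ∈ 𝒦) →
    0 ≤ ⨆ x : X, ∑ k, lam k * (fs k x - L (fs k))

noncomputable def NatExt {X : Type*} (𝒦 : Set (X → ℝ)) (L : (X → ℝ) → ℝ)
    (g : X → ℝ) : ℝ :=
  sSup {α : ℝ | ∃ (n : ℕ) (lam : Fin n → ℝ) (fs : Fin n → X → ℝ),
    (∀ k, 0 ≤ lam k) ∧ (∀ k, fs k ∈ 𝒦) ∧
    α = ⨅ x : X, (g x - ∑ k, lam k * (fs k x - L (fs k)))}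

def IsBanachLimit (B : (ℕ → ℝ) → ℝ) : Prop :=
  IsCoherentPrevision B ∧
  ∀ g : ℕ → ℝ, IsGamble g → B (fun n => g (n + 1)) = B g

section Gambles

open Set

variable {X : Type*}

lemma isGamble_iff {f : X → ℝ} : IsGamble f ↔ ∃ C : ℝ, ∀ x, |f x| ≤ C := by
  constructor
  · rintro ⟨⟨a, ha⟩, ⟨b, hb⟩⟩
    refine ⟨|a| + |b|, fun x => abs_le.2 ⟨?_, ?_⟩⟩
    · have := hb (mem_range_self (f := f) x)
      have hb' : -(|a| + |b|) ≤ b := by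
        have : -|b| ≤ b := neg_abs_le b
        nlinarith [abs_nonneg a]
      linarith
    · have := ha (mem_range_self (f := f) x)
      have : f x ≤ a := this
      have : a ≤ |a| := le_abs_self a
      nlinarith [abs_nonneg b, ha (mem_range_self (f := f) x)]
  · rintro ⟨C, hC⟩
    constructor
    · exact ⟨C, by rintro y ⟨x, rfl⟩; exact (abs_le.1 (hC x)).2⟩
    · exact ⟨-C, by rintro y ⟨x, rfl⟩; exact (abs_le.1 (hC x)).1⟩

lemma isGamble_of_bound {f : X → ℝ} (C : ℝ) (hC : ∀ x, |f x| ≤ C) : IsGamble f :=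
  isGamble_iff.2 ⟨C, hC⟩

lemma gamble_zero : IsGamble (0 : X → ℝ) :=
  isGamble_of_bound 0 (fun _ => by simp)

lemma gamble_const (c : ℝ) : IsGamble (fun _ : X => c) :=
  isGamble_of_bound |c| (fun _ => le_rfl)

lemma gamble_add {f g : X → ℝ} (hf : IsGamble f) (hg : IsGamble g) :
    IsGamble (f + g) := by
  obtain ⟨C, hC⟩ := isGamble_iff.1 hf
  obtain ⟨D, hD⟩ := isGamble_iff.1 hg
  exact isGamble_of_bound (C + D) (fun x => (abs_add_le _ _).trans (add_le_add (hC x) (hD x)))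

lemma gamble_neg {f : X → ℝ} (hf : IsGamble f) : IsGamble (-f) := by
  obtain ⟨C, hC⟩ := isGamble_iff.1 hf
  exact isGamble_of_bound C (fun x => by simpa using hC x)

lemma gamble_sub {f g : X → ℝ} (hf : IsGamble f) (hg : IsGamble g) :
    IsGamble (f - g) := by
  rw [sub_eq_add_neg]; exact gamble_add hf (gamble_neg hg)

lemma gamble_smul (c : ℝ) {f : X → ℝ} (hf : IsGamble f) : IsGamble (c • f) := by
  obtain ⟨C, hC⟩ := isGamble_iff.1 hf
  refine isGamble_of_bound (|c| * C) (fun x => ?_)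
  have : |c • f x| = |c| * |f x| := abs_mul c (f x)
  calc |(c • f) x| = |c| * |f x| := by simpa [Pi.smul_apply] using this
  _ ≤ |c| * C := by
      have := hC x
      nlinarith [abs_nonneg c, abs_nonneg (f x)]

lemma gamble_comp {f : X → ℝ} (hf : IsGamble f) (T : X → X) : IsGamble (f ∘ T) := by
  obtain ⟨C, hC⟩ := isGamble_iff.1 hf
  exact isGamble_of_bound C (fun x => hC (T x))

lemma gamble_sum {ι : Type*} (s : Finset ι) (f : ι → X → ℝ)
    (hf : ∀ i ∈ s, IsGamble (f i)) : IsGamble (∑ i ∈ s, f i) := by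
  classical
  induction s using Finset.induction with
  | empty => simpa using gamble_zero
  | insert a s hni ih =>
    rw [Finset.sum_insert hni]
    exact gamble_add (hf a (s.mem_insert_self a))
      (ih (fun i hi => hf i (Finset.mem_insert_of_mem hi)))

set_option linter.unusedSectionVars false
variable [Nonempty X]

lemma sInf_range_le {f : X → ℝ} (hf : IsGamble f) (x : X) : sInf (range f) ≤ f x :=
  csInf_le hf.2 (mem_range_self x)

lemma le_sSup_range {f : X → ℝ} (hf : IsGamble f) (x : X) : f x ≤ sSup (range f) :=
  le_csSup hf.1 (mem_range_self x)

lemma le_sInf_range {f : X → ℝ} {c : ℝ} (h : ∀ x, c ≤ f x) : c ≤ sInf (range f) :=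
  le_csInf (range_nonempty f) (by rintro y ⟨x, rfl⟩; exact h x)

lemma sSup_range_le {f : X → ℝ} {c : ℝ} (h : ∀ x, f x ≤ c) : sSup (range f) ≤ c :=
  csSup_le (range_nonempty f) (by rintro y ⟨x, rfl⟩; exact h x)

end Gambles

section Prevision
set_option linter.unusedSectionVars false

open Set

variable {X : Type*} [Nonempty X] {P : (X → ℝ) → ℝ}

lemma P_zero (hP : IsCoherentPrevision P) : P 0 = 0 := by
  have := hP.1 0 0 gamble_zero gamble_zero
  simp at this
  linarith

lemma P_neg (hP : IsCoherentPrevision P) {f : X → ℝ} (hf : IsGamble f) :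
    P (-f) = - P f := by
  have h := hP.1 f (-f) hf (gamble_neg hf)
  rw [add_neg_cancel, P_zero hP] at h
  linarith

lemma P_le_apply_bounds (hP : IsCoherentPrevision P) {f : X → ℝ} (hf : IsGamble f)
    {c : ℝ} (h : ∀ x, c ≤ f x) : c ≤ P f :=
  le_trans (le_sInf_range h) (hP.2 f hf)

lemma P_le_sup (hP : IsCoherentPrevision P) {f : X → ℝ} (hf : IsGamble f)
    {c : ℝ} (h : ∀ x, f x ≤ c) : P f ≤ c := by
  have := P_le_apply_bounds hP (gamble_neg hf) (c := -c) (fun x => by simpa using h x)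
  rw [P_neg hP hf] at this
  linarith

lemma abs_P_le (hP : IsCoherentPrevision P) {f : X → ℝ} {C : ℝ}
    (hC : ∀ x, |f x| ≤ C) : |P f| ≤ C := by
  have hf : IsGamble f := isGamble_of_bound C hC
  have h1 : P f ≤ C := P_le_sup hP hf (fun x => (abs_le.1 (hC x)).2)
  have h2 : -C ≤ P f := P_le_apply_bounds hP hf (fun x => (abs_le.1 (hC x)).1)
  exact abs_le.2 ⟨by linarith, h1⟩

lemma P_sub (hP : IsCoherentPrevision P) {f g : X → ℝ} (hf : IsGamble f)
    (hg : IsGamble g) : P (f - g) = P f - P g := by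
  have h := hP.1 (f - g) g (gamble_sub hf hg) hg
  rw [sub_add_cancel] at h
  linarith

lemma P_nat_smul (hP : IsCoherentPrevision P) {f : X → ℝ} (hf : IsGamble f) :
    ∀ n : ℕ, P ((n : ℝ) • f) = n * P f := by
  intro n
  induction n with
  | zero => simpa using P_zero hP
  | succ n ih =>
    have : ((n+1 : ℕ) : ℝ) • f = (n : ℝ) • f + f := by
      push_cast; rw [add_smul, one_smul]
    rw [this, hP.1 _ _ (gamble_smul _ hf) hf, ih]
    push_cast; ring

lemma P_rat_smul (hP : IsCoherentPrevision P) {f : X → ℝ} (hf : IsGamble f)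
    (q : ℚ) (hq : 0 ≤ q) : P ((q : ℝ) • f) = q * P f := by
  have hden : ((q.den : ℝ)) ≠ 0 := by positivity
  have hnum : ((q.num.toNat : ℝ)) = (q.num : ℝ) := by
    have h0 : (0:ℤ) ≤ q.num := Rat.num_nonneg.2 hq
    exact_mod_cast congrArg (fun z : ℤ => (z : ℝ)) (Int.toNat_of_nonneg h0)
  have hkey : ((q.den : ℝ)) • ((q : ℝ) • f) = ((q.num.toNat : ℝ)) • f := by
    rw [smul_smul]; congr 1
    rw [hnum, Rat.cast_def]; field_simp
  have h1 := P_nat_smul hP (gamble_smul (q : ℝ) hf) q.den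
  rw [hkey, P_nat_smul hP hf q.num.toNat, hnum] at h1
  have hdq : (q.den:ℝ) * (q:ℝ) = q.num := by rw [Rat.cast_def]; field_simp
  apply mul_left_cancel₀ hden
  rw [← h1, ← mul_assoc, hdq]

lemma P_homog (hP : IsCoherentPrevision P) {f : X → ℝ} (hf : IsGamble f)
    {c : ℝ} (hc : 0 ≤ c) : P (c • f) = c * P f := by
  obtain ⟨C, hC⟩ := isGamble_iff.1 hf
  have hC0 : 0 ≤ C := le_trans (abs_nonneg _) (hC (Classical.arbitrary X))
  have key : ∀ ε > 0, |P (c • f) - c * P f| ≤ ε := by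
    intro ε hε
    have hε' : 0 < ε / (C + |P f| + 1) := by positivity
    obtain ⟨q0, hq0⟩ := exists_rat_near c hε'
    set q : ℚ := max q0 0 with hqdef
    have hqnn' : (0:ℚ) ≤ q := le_max_right _ _
    have hqnn : (0:ℝ) ≤ (q:ℝ) := by exact_mod_cast hqnn'
    have hq1 : |c - (q:ℝ)| < ε / (C + |P f| + 1) := by
      rcases le_or_gt 0 q0 with h | h
      · have : q = q0 := max_eq_left h
        rw [hqdef] at this ⊢
        rw [this]; exact hq0
      · have hq00 : ((q : ℚ) : ℝ) = 0 := by
          rw [hqdef, max_eq_right h.le]; norm_num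
        rw [hq00, sub_zero, abs_of_nonneg hc]
        have hq0r : ((q0:ℝ)) < 0 := by exact_mod_cast h
        have hcc : c ≤ |c - q0| := by rw [abs_of_nonneg (by linarith)]; linarith
        linarith [lt_of_le_of_lt hcc hq0]
    have hsplit : c • f = (c - (q:ℝ)) • f + (q:ℝ) • f := by
      rw [← add_smul]; ring_nf
    have hadd := hP.1 _ _ (gamble_smul (c - (q:ℝ)) hf) (gamble_smul (q:ℝ) hf)
    rw [← hsplit] at hadd
    have hrat := P_rat_smul hP hf q hqnn'
    have hbound : |P ((c - (q:ℝ)) • f)| ≤ |c - (q:ℝ)| * C := by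
      refine abs_P_le hP (fun x => ?_)
      have : |(c - (q:ℝ)) • f x| = |c - (q:ℝ)| * |f x| := abs_mul _ _
      calc |((c - (q:ℝ)) • f) x| = |c - (q:ℝ)| * |f x| := by
            simpa [Pi.smul_apply] using this
      _ ≤ |c - (q:ℝ)| * C := by nlinarith [abs_nonneg (c - (q:ℝ)), hC x]
    have : P (c • f) - c * P f = P ((c - (q:ℝ)) • f) + ((q:ℝ) - c) * P f := by
      rw [hadd, hrat]; ring
    rw [this]
    calc |P ((c - (q:ℝ)) • f) + ((q:ℝ) - c) * P f|
        ≤ |P ((c - (q:ℝ)) • f)| + |((q:ℝ) - c) * P f| := abs_add_le _ _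
      _ ≤ |c - (q:ℝ)| * C + |c - (q:ℝ)| * |P f| := by
          rw [abs_mul, abs_sub_comm]
          exact add_le_add hbound le_rfl
      _ = |c - (q:ℝ)| * (C + |P f|) := by ring
      _ ≤ (ε / (C + |P f| + 1)) * (C + |P f|) := by
          apply mul_le_mul_of_nonneg_right (le_of_lt hq1)
          positivity
      _ ≤ ε := by
          rw [div_mul_eq_mul_div, div_le_iff₀ (by positivity)]
          nlinarith [abs_nonneg (P f)]
  have : |P (c • f) - c * P f| ≤ 0 := by
    by_contra h
    push_neg at h
    have := key (|P (c • f) - c * P f| / 2) (by linarith)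
    linarith
  have := abs_nonpos_iff.1 (this)
  linarith [sub_eq_zero.1 this]

lemma P_monotone (hP : IsCoherentPrevision P) {f g : X → ℝ} (hf : IsGamble f)
    (hg : IsGamble g) (h : ∀ x, f x ≤ g x) : P f ≤ P g := by
  have h1 := P_le_apply_bounds hP (gamble_sub hg hf) (c := 0)
    (fun x => by simpa [Pi.sub_apply] using sub_nonneg.2 (h x))
  rw [P_sub hP hg hf] at h1
  linarith

end Prevision
section Birk

noncomputable def blk (a : ℕ → ℝ) (d k : ℕ) : ℝ := ∑ ℓ ∈ Finset.range d, a (k + ℓ)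

noncomputable def Jd (a : ℕ → ℝ) (d : ℕ) : ℝ := ⨅ k : ℕ, blk a d k / d

noncomputable def lowlim (a : ℕ → ℝ) : ℝ := ⨆ n : ℕ, Jd a (n+1)

lemma lowlim_eq_iSup_iInf (a : ℕ → ℝ) :
    lowlim a = ⨆ n : ℕ, ⨅ k : ℕ, (∑ ℓ ∈ Finset.range (n+1), a (k + ℓ)) / ((n : ℝ) + 1) := by
  unfold lowlim Jd blk
  congr 1; funext n; congr 1; funext k; push_cast; ring_nf

variable {a b : ℕ → ℝ} {lo hi : ℝ}

lemma blk_add_len (a : ℕ → ℝ) (p q k : ℕ) :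
    blk a (p + q) k = blk a p k + blk a q (k + p) := by
  unfold blk
  rw [Finset.sum_range_add]
  congr 1
  exact Finset.sum_congr rfl (fun i _ => by rw [add_assoc])

lemma blk_mul (a : ℕ → ℝ) (d e k : ℕ) :
    blk a (d * e) k = ∑ j ∈ Finset.range e, blk a d (k + j * d) := by
  induction e with
  | zero => simp [blk]
  | succ e ih =>
    rw [Nat.mul_succ, blk_add_len, ih, Finset.sum_range_succ, Nat.mul_comm e d]

lemma blk_le (h : ∀ ℓ, a ℓ ≤ hi) (d k : ℕ) : blk a d k ≤ d * hi := by
  unfold blk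
  calc ∑ ℓ ∈ Finset.range d, a (k + ℓ) ≤ ∑ ℓ ∈ Finset.range d, hi :=
        Finset.sum_le_sum (fun i _ => h _)
  _ = d * hi := by rw [Finset.sum_const, Finset.card_range]; simp

lemma le_blk (h : ∀ ℓ, lo ≤ a ℓ) (d k : ℕ) : (d : ℝ) * lo ≤ blk a d k := by
  unfold blk
  calc (d:ℝ) * lo = ∑ ℓ ∈ Finset.range d, lo := by rw [Finset.sum_const, Finset.card_range]; simp
  _ ≤ ∑ ℓ ∈ Finset.range d, a (k + ℓ) := Finset.sum_le_sum (fun i _ => h _)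

lemma bddBelow_blk_div (h : ∀ ℓ, lo ≤ a ℓ) (d : ℕ) (hd : 0 < d) :
    BddBelow (Set.range (fun k => blk a d k / d)) := by
  refine ⟨lo, ?_⟩
  rintro y ⟨k, rfl⟩
  rw [le_div_iff₀ (by exact_mod_cast hd)]
  calc lo * d = (d:ℝ) * lo := by ring
  _ ≤ blk a d k := le_blk h d k

lemma Jd_le (hlo : ∀ ℓ, lo ≤ a ℓ) (h : ∀ ℓ, a ℓ ≤ hi) {d : ℕ} (hd : 0 < d) :
    Jd a d ≤ hi := by
  have h0 : blk a d 0 / d ≤ hi := by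
    rw [div_le_iff₀ (by exact_mod_cast hd)]
    calc blk a d 0 ≤ d * hi := blk_le h d 0
    _ = hi * d := by ring
  exact le_trans (ciInf_le (bddBelow_blk_div hlo d hd) 0) h0

lemma le_Jd (h : ∀ ℓ, lo ≤ a ℓ) {d : ℕ} (hd : 0 < d) : lo ≤ Jd a d := by
  refine le_ciInf (fun k => ?_)
  rw [le_div_iff₀ (by exact_mod_cast hd)]
  calc lo * d = (d:ℝ) * lo := by ring
  _ ≤ blk a d k := le_blk h d k

lemma Jd_le_blk_div (h : ∀ ℓ, lo ≤ a ℓ) {d : ℕ} (hd : 0 < d) (k : ℕ) :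
    Jd a d ≤ blk a d k / d :=
  ciInf_le (bddBelow_blk_div h d hd) k

lemma Jd_refine (h : ∀ ℓ, lo ≤ a ℓ) {d e : ℕ} (hd : 0 < d) (he : 0 < e) :
    Jd a d ≤ Jd a (d * e) := by
  refine le_ciInf (fun k => ?_)
  have hde : (0:ℝ) < (d:ℝ) * e := by positivity
  rw [le_div_iff₀ (by exact_mod_cast Nat.mul_pos hd he)]
  push_cast
  rw [blk_mul]
  have : ∀ j ∈ Finset.range e, Jd a d * d ≤ blk a d (k + j * d) := by
    intro j _
    have := Jd_le_blk_div h hd (k := k + j * d)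
    rw [le_div_iff₀ (by exact_mod_cast hd)] at this
    exact this
  calc Jd a d * ((d:ℝ) * e) = ∑ _j ∈ Finset.range e, Jd a d * d := by
        rw [Finset.sum_const, Finset.card_range]; push_cast; ring
  _ ≤ ∑ j ∈ Finset.range e, blk a d (k + j * d) := Finset.sum_le_sum this
end Birk

section Lowlim

variable {a b : ℕ → ℝ} {lo hi c : ℝ}

lemma bddAbove_Jd (hlo : ∀ ℓ, lo ≤ a ℓ) (hhi : ∀ ℓ, a ℓ ≤ hi) :
    BddAbove (Set.range (fun n : ℕ => Jd a (n+1))) := by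
  refine ⟨hi, ?_⟩
  rintro y ⟨n, rfl⟩
  exact Jd_le hlo hhi n.succ_pos

lemma le_lowlim (hlo : ∀ ℓ, lo ≤ a ℓ) (hhi : ∀ ℓ, a ℓ ≤ hi) : lo ≤ lowlim a :=
  le_trans (le_Jd hlo Nat.one_pos) (le_ciSup (bddAbove_Jd hlo hhi) 0)

lemma lowlim_le (hlo : ∀ ℓ, lo ≤ a ℓ) (hhi : ∀ ℓ, a ℓ ≤ hi) : lowlim a ≤ hi :=
  ciSup_le (fun n => Jd_le hlo hhi n.succ_pos)

lemma blk_add (a b : ℕ → ℝ) (d k : ℕ) :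
    blk (fun ℓ => a ℓ + b ℓ) d k = blk a d k + blk b d k := by
  unfold blk; rw [← Finset.sum_add_distrib]

lemma lowlim_superadd (hloa : ∀ ℓ, lo ≤ a ℓ) (hhia : ∀ ℓ, a ℓ ≤ hi)
    (hlob : ∀ ℓ, lo ≤ b ℓ) (hhib : ∀ ℓ, b ℓ ≤ hi) :
    lowlim a + lowlim b ≤ lowlim (fun ℓ => a ℓ + b ℓ) := by
  refine le_of_forall_pos_le_add (fun ε hε => ?_)
  obtain ⟨n1, hn1⟩ := exists_lt_of_lt_ciSup
    (show lowlim a - ε/2 < lowlim a by linarith : lowlim a - ε/2 < ⨆ n : ℕ, Jd a (n+1))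
  obtain ⟨n2, hn2⟩ := exists_lt_of_lt_ciSup
    (show lowlim b - ε/2 < lowlim b by linarith : lowlim b - ε/2 < ⨆ n : ℕ, Jd b (n+1))
  set d := n1 + 1
  set e := n2 + 1
  have hlos : ∀ ℓ, lo + lo ≤ a ℓ + b ℓ := fun ℓ => add_le_add (hloa ℓ) (hlob ℓ)
  have hde : d * e = (d * e - 1) + 1 := (Nat.succ_pred_eq_of_pos (Nat.mul_pos n1.succ_pos n2.succ_pos)).symm
  have key : Jd a d + Jd b e ≤ Jd (fun ℓ => a ℓ + b ℓ) (d * e) := by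
    have h1 : Jd a d ≤ Jd a (d * e) := Jd_refine hloa n1.succ_pos n2.succ_pos
    have h2 : Jd b e ≤ Jd b (d * e) := by
      rw [Nat.mul_comm]
      exact Jd_refine hlob n2.succ_pos n1.succ_pos
    have h3 : Jd a (d * e) + Jd b (d * e) ≤ Jd (fun ℓ => a ℓ + b ℓ) (d * e) := by
      refine le_ciInf (fun k => ?_)
      rw [blk_add]
      have ha := Jd_le_blk_div hloa (Nat.mul_pos n1.succ_pos n2.succ_pos) k
      have hb := Jd_le_blk_div hlob (Nat.mul_pos n1.succ_pos n2.succ_pos) k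
      rw [add_div]
      exact add_le_add ha hb
    linarith
  have hsup : Jd (fun ℓ => a ℓ + b ℓ) (d * e) ≤ lowlim (fun ℓ => a ℓ + b ℓ) := by
    have := le_ciSup (bddAbove_Jd (a := fun ℓ => a ℓ + b ℓ) (lo := lo + lo) (hi := hi + hi)
      hlos (fun ℓ => add_le_add (hhia ℓ) (hhib ℓ))) (d * e - 1)
    rwa [← hde] at this
  linarith

lemma lowlim_const (c : ℝ) : lowlim (fun _ => c) = c := by
  have hJ : ∀ n : ℕ, Jd (fun _ => c) (n+1) = c := by
    intro n
    have : ∀ k : ℕ, blk (fun _ => c) (n+1) k / ((n+1 : ℕ) : ℝ) = c := by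
      intro k
      unfold blk
      rw [Finset.sum_const, Finset.card_range, nsmul_eq_mul]
      field_simp
    unfold Jd
    simp only [this]
    exact ciInf_const
  unfold lowlim
  simp only [hJ]
  exact ciSup_const

lemma lowlim_smul (hc : 0 ≤ c) (a : ℕ → ℝ) :
    lowlim (fun ℓ => c * a ℓ) = c * lowlim a := by
  have hblk : ∀ d k, blk (fun ℓ => c * a ℓ) d k = c * blk a d k := by
    intro d k; unfold blk; rw [Finset.mul_sum]
  have hJ : ∀ d, Jd (fun ℓ => c * a ℓ) d = c * Jd a d := by
    intro d
    unfold Jd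
    simp only [hblk, mul_div_assoc]
    exact (Real.mul_iInf_of_nonneg hc _).symm
  unfold lowlim
  simp only [hJ]
  exact (Real.mul_iSup_of_nonneg hc _).symm

lemma blk_telescope (b : ℕ → ℝ) (d k : ℕ) :
    blk (fun ℓ => b ℓ - b (ℓ+1)) d k = b k - b (k + d) := by
  unfold blk
  exact Finset.sum_range_sub' (fun i => b (k + i)) d

lemma lowlim_telescope (b : ℕ → ℝ) (C : ℝ) (hC : ∀ ℓ, |b ℓ| ≤ C) :
    0 ≤ lowlim (fun ℓ => b ℓ - b (ℓ+1)) := by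
  set a : ℕ → ℝ := fun ℓ => b ℓ - b (ℓ+1) with ha
  have hC0 : 0 ≤ C := le_trans (abs_nonneg _) (hC 0)
  have hlo : ∀ ℓ, -(2*C) ≤ a ℓ := by
    intro ℓ
    have h1 := abs_le.1 (hC ℓ); have h2 := abs_le.1 (hC (ℓ+1))
    show -(2*C) ≤ b ℓ - b (ℓ+1); linarith [h1.1, h2.2]
  have hhi : ∀ ℓ, a ℓ ≤ 2*C := by
    intro ℓ
    have h1 := abs_le.1 (hC ℓ); have h2 := abs_le.1 (hC (ℓ+1))
    show b ℓ - b (ℓ+1) ≤ 2*C; linarith [h1.2, h2.1]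
  have hJ : ∀ n : ℕ, -(2*C)/((n+1 : ℕ) : ℝ) ≤ Jd a (n+1) := by
    intro n
    refine le_ciInf (fun k => ?_)
    rw [div_le_div_iff_of_pos_right (by positivity)]
    rw [blk_telescope]
    have h1 := abs_le.1 (hC k); have h2 := abs_le.1 (hC (k + (n+1)))
    linarith [h1.1, h2.2]
  by_contra hcon
  push_neg at hcon
  obtain ⟨n, hn⟩ := exists_nat_gt (2*C / (-(lowlim a)))
  have hlt : 2*C / ((n+1 : ℕ) : ℝ) < -(lowlim a) := by
    rw [div_lt_iff₀ (by positivity)]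
    have hpos : 0 < -(lowlim a) := by linarith
    have : 2*C < -(lowlim a) * n + -(lowlim a) := by
      rcases eq_or_lt_of_le hC0 with h | h
      · push_cast; nlinarith
      · have : 2*C / (-(lowlim a)) < n := hn
        rw [div_lt_iff₀ hpos] at this
        nlinarith
    push_cast; linarith
  have := le_trans (hJ n) (le_ciSup (bddAbove_Jd hlo hhi) n)
  have hfin : -(2*C)/((n+1 : ℕ) : ℝ) ≤ lowlim a := this
  rw [neg_div] at hfin
  linarith

end Lowlim
section Uplim

noncomputable def uplim (a : ℕ → ℝ) : ℝ := -lowlim (fun ℓ => -(a ℓ))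

lemma uplim_congr {a b : ℕ → ℝ} (h : ∀ ℓ, a ℓ = b ℓ) : uplim a = uplim b := by
  unfold uplim
  have : (fun ℓ => -(a ℓ)) = (fun ℓ => -(b ℓ)) := by funext ℓ; rw [h]
  rw [this]

lemma uplim_subadd {a b : ℕ → ℝ} {C : ℝ} (ha : ∀ ℓ, |a ℓ| ≤ C) (hb : ∀ ℓ, |b ℓ| ≤ C) :
    uplim (fun ℓ => a ℓ + b ℓ) ≤ uplim a + uplim b := by
  unfold uplim
  have key := lowlim_superadd (a := fun ℓ => -(a ℓ)) (b := fun ℓ => -(b ℓ)) (lo := -C) (hi := C)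
    (fun ℓ => by have := abs_le.1 (ha ℓ); show -C ≤ -(a ℓ); linarith [this.2])
    (fun ℓ => by have := abs_le.1 (ha ℓ); show -(a ℓ) ≤ C; linarith [this.1])
    (fun ℓ => by have := abs_le.1 (hb ℓ); show -C ≤ -(b ℓ); linarith [this.2])
    (fun ℓ => by have := abs_le.1 (hb ℓ); show -(b ℓ) ≤ C; linarith [this.1])
  have : lowlim (fun ℓ => -(a ℓ) + -(b ℓ)) = lowlim (fun ℓ => -(a ℓ + b ℓ)) := by
    congr 1; funext ℓ; ring
  linarith [key, this ▸ key]

lemma uplim_homog {c : ℝ} (hc : 0 ≤ c) (a : ℕ → ℝ) :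
    uplim (fun ℓ => c * a ℓ) = c * uplim a := by
  unfold uplim
  have : (fun ℓ => -(c * a ℓ)) = (fun ℓ => c * (-(a ℓ))) := by funext ℓ; ring
  rw [this, lowlim_smul hc]
  ring

lemma uplim_le {a : ℕ → ℝ} {lo hi : ℝ} (hlo : ∀ ℓ, lo ≤ a ℓ) (hhi : ∀ ℓ, a ℓ ≤ hi) :
    uplim a ≤ hi := by
  unfold uplim
  have := le_lowlim (a := fun ℓ => -(a ℓ)) (lo := -hi) (hi := -lo)
    (fun ℓ => by show -hi ≤ -(a ℓ); linarith [hhi ℓ]) (fun ℓ => by show -(a ℓ) ≤ -lo; linarith [hlo ℓ])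
  linarith

lemma le_uplim {a : ℕ → ℝ} {lo hi : ℝ} (hlo : ∀ ℓ, lo ≤ a ℓ) (hhi : ∀ ℓ, a ℓ ≤ hi) :
    lo ≤ uplim a := by
  unfold uplim
  have := lowlim_le (a := fun ℓ => -(a ℓ)) (lo := -hi) (hi := -lo)
    (fun ℓ => by show -hi ≤ -(a ℓ); linarith [hhi ℓ]) (fun ℓ => by show -(a ℓ) ≤ -lo; linarith [hlo ℓ])
  linarith

lemma uplim_const (c : ℝ) : uplim (fun _ => c) = c := by
  unfold uplim
  rw [lowlim_const]; ring

lemma uplim_shift_sub {a : ℕ → ℝ} {C : ℝ} (hC : ∀ ℓ, |a ℓ| ≤ C) :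
    uplim (fun ℓ => a (ℓ+1) - a ℓ) ≤ 0 := by
  unfold uplim
  have h := lowlim_telescope a C hC
  have heq : (fun ℓ => -(a (ℓ+1) - a ℓ)) = (fun ℓ => a ℓ - a (ℓ+1)) := by funext ℓ; ring
  rw [heq]
  linarith

lemma uplim_sub_shift {a : ℕ → ℝ} {C : ℝ} (hC : ∀ ℓ, |a ℓ| ≤ C) :
    uplim (fun ℓ => a ℓ - a (ℓ+1)) ≤ 0 := by
  unfold uplim
  have h := lowlim_telescope (fun ℓ => -(a ℓ)) C (fun ℓ => by simpa using hC ℓ)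
  have heq : (fun ℓ => -(a ℓ - a (ℓ+1))) = (fun ℓ => (-(a ℓ)) - (-(a (ℓ+1)))) := by
    funext ℓ; ring
  rw [heq]
  linarith

end Uplim

section HB

variable {X : Type*}

def GambleSub (X : Type*) : Submodule ℝ (X → ℝ) where
  carrier := {f | IsGamble f}
  add_mem' := fun hf hg => gamble_add hf hg
  zero_mem' := gamble_zero
  smul_mem' := fun c f hf => gamble_smul c hf

lemma hb_exists (N : ↥(GambleSub X) → ℝ)
    (Nhom : ∀ c : ℝ, 0 < c → ∀ x, N (c • x) = c * N x)
    (Nadd : ∀ x y, N (x + y) ≤ N x + N y)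
    (h : ↥(GambleSub X)) (hh : h ≠ 0) (y : ℝ)
    (hy1 : y ≤ N h) (hy2 : -y ≤ N (-h)) :
    ∃ ψ : ↥(GambleSub X) →ₗ[ℝ] ℝ, (∀ x, ψ x ≤ N x) ∧ ψ h = y := by
  have hN0 : 0 ≤ N 0 := by
    have := Nadd 0 0
    rw [add_zero] at this
    linarith
  have hdom : ∀ x : (LinearPMap.mkSpanSingleton (K := ℝ) (L := ℝ) (σ := RingHom.id ℝ) h y hh).domain,
      (LinearPMap.mkSpanSingleton (K := ℝ) (L := ℝ) (σ := RingHom.id ℝ) h y hh) x ≤ N x := by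
    rintro ⟨x, hx⟩
    have hx' : x ∈ Submodule.span ℝ {h} := hx
    obtain ⟨t, ht⟩ := Submodule.mem_span_singleton.1 hx'
    subst ht
    rw [LinearPMap.mkSpanSingleton'_apply, RingHom.id_apply]
    rcases lt_trichotomy t 0 with htr | htr | htr
    · have e1 : N (t • h) = (-t) * N (-h) := by
        have e : t • h = (-t) • (-h) := by rw [smul_neg, neg_smul, neg_neg]
        rw [e, Nhom (-t) (by linarith) (-h)]
      have e2 : t • y = (-t) * (-y) := by rw [smul_eq_mul]; ring
      rw [e1, e2]
      exact mul_le_mul_of_nonneg_left hy2 (by linarith)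
    · subst htr
      rw [zero_smul]
      convert hN0 using 2
      exact zero_smul ℝ h
    · rw [Nhom t htr h, smul_eq_mul]
      exact mul_le_mul_of_nonneg_left hy1 (le_of_lt htr)
  obtain ⟨ψ, hext, hle⟩ := exists_extension_of_le_sublinear _ N Nhom Nadd hdom
  refine ⟨ψ, hle, ?_⟩
  have hmem : h ∈ (LinearPMap.mkSpanSingleton (K := ℝ) (L := ℝ) (σ := RingHom.id ℝ) h y hh).domain :=
    Submodule.mem_span_singleton_self h
  have h2 := hext ⟨h, hmem⟩
  rwa [LinearPMap.mkSpanSingleton_apply] at h2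

end HB
section NatExtHB

open Set

variable {X : Type*} [Nonempty X]

lemma sSup_range_const (c : ℝ) : sSup (range (fun _ : X => c)) = c := by
  rw [Set.range_const, csSup_singleton]

lemma sInf_range_zero : sInf (range (0 : X → ℝ)) = 0 := by
  have : (0 : X → ℝ) = fun _ : X => (0:ℝ) := rfl
  rw [this, Set.range_const, csInf_singleton]

lemma sSup_range_mul {h : X → ℝ} (hg : IsGamble h) {c : ℝ} (hc : 0 < c) :
    sSup (range (fun x => c * h x)) = c * sSup (range h) := by
  apply le_antisymm
  · exact sSup_range_le (fun x => mul_le_mul_of_nonneg_left (le_sSup_range hg x) hc.le)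
  · rw [mul_comm, ← le_div_iff₀ hc]
    refine sSup_range_le (fun x => ?_)
    rw [le_div_iff₀ hc, mul_comm]
    have := le_sSup_range (gamble_smul c hg) x
    exact this

lemma neg_sSup_range_neg {g : X → ℝ} (hg : IsGamble g) :
    sInf (range g) ≤ -sSup (range (fun x => -(g x))) := by
  have h1 : sSup (range (fun x => -(g x))) ≤ -sInf (range g) :=
    sSup_range_le (fun x => by linarith [sInf_range_le hg x])
  linarith

variable (𝒦 : Set (X → ℝ)) (L : (X → ℝ) → ℝ)

def UB (g : X → ℝ) : Set ℝ :=
  {β | ∃ (n : ℕ) (lam : Fin n → ℝ) (fs : Fin n → X → ℝ),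
    (∀ k, 0 ≤ lam k) ∧ (∀ k, fs k ∈ 𝒦) ∧
    β = sSup (range (fun x => g x + ∑ k, lam k * (fs k x - L (fs k))))}

variable {𝒦 L}

lemma sfun_gamble (h𝒦g : ∀ f ∈ 𝒦, IsGamble f) {n : ℕ} (lam : Fin n → ℝ)
    (fs : Fin n → X → ℝ) (hfs : ∀ k, fs k ∈ 𝒦) :
    IsGamble (fun x => ∑ k, lam k * (fs k x - L (fs k))) := by
  have heq : (fun x => ∑ k, lam k * (fs k x - L (fs k))) =
      ∑ k ∈ Finset.univ, (lam k • (fs k - fun _ => L (fs k))) := by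
    funext x
    rw [Finset.sum_apply]
    exact Finset.sum_congr rfl (fun k _ => by
      simp [Pi.smul_apply, Pi.sub_apply, mul_sub])
  rw [heq]
  exact gamble_sum _ _ (fun k _ => gamble_smul _ (gamble_sub (h𝒦g _ (hfs k)) (gamble_const _)))

lemma UB_mem_le (h𝒦g : ∀ f ∈ 𝒦, IsGamble f) (hasl : AvoidsSureLoss 𝒦 L)
    {g : X → ℝ} (hg : IsGamble g) {β : ℝ} (hβ : β ∈ UB 𝒦 L g) :
    sInf (range g) ≤ β := by
  obtain ⟨n, lam, fs, hlam, hfs, rfl⟩ := hβ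
  set s : X → ℝ := fun x => ∑ k, lam k * (fs k x - L (fs k)) with hs
  have hsg : IsGamble s := sfun_gamble h𝒦g lam fs hfs
  have hsum : IsGamble (fun x => g x + s x) := by
    have := gamble_add hg hsg
    have heq : g + s = fun x => g x + s x := rfl
    rwa [heq] at this
  have h1 : ∀ x, sInf (range g) + s x ≤ sSup (range (fun x => g x + s x)) := by
    intro x
    calc sInf (range g) + s x ≤ g x + s x := by linarith [sInf_range_le hg x]
    _ ≤ _ := le_sSup_range hsum x
  have h2 : sSup (range s) ≤ sSup (range (fun x => g x + s x)) - sInf (range g) :=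
    sSup_range_le (fun x => by linarith [h1 x])
  have h3 : 0 ≤ sSup (range s) := hasl n lam fs hlam hfs
  linarith

lemma UB_nonempty (g : X → ℝ) : (sSup (range g)) ∈ UB 𝒦 L g := by
  refine ⟨0, fun _ => 0, fun _ => 0, fun k => le_rfl, fun k => k.elim0, ?_⟩
  congr 1
  funext x
  simp

lemma UB_bddBelow (h𝒦g : ∀ f ∈ 𝒦, IsGamble f) (hasl : AvoidsSureLoss 𝒦 L)
    {g : X → ℝ} (hg : IsGamble g) : BddBelow (UB 𝒦 L g) :=
  ⟨sInf (range g), fun _ hβ => UB_mem_le h𝒦g hasl hg hβ⟩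

noncomputable def NL (𝒦 : Set (X → ℝ)) (L : (X → ℝ) → ℝ) : ↥(GambleSub X) → ℝ :=
  fun g => sInf (UB 𝒦 L g.1)

lemma NL_le_sSup (h𝒦g : ∀ f ∈ 𝒦, IsGamble f) (hasl : AvoidsSureLoss 𝒦 L)
    (g : ↥(GambleSub X)) : NL 𝒦 L g ≤ sSup (range g.1) :=
  csInf_le (UB_bddBelow h𝒦g hasl g.2) (UB_nonempty g.1)

lemma sInf_le_NL (h𝒦g : ∀ f ∈ 𝒦, IsGamble f) (hasl : AvoidsSureLoss 𝒦 L)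
    (g : ↥(GambleSub X)) : sInf (range g.1) ≤ NL 𝒦 L g :=
  le_csInf ⟨_, UB_nonempty g.1⟩ (fun _ hβ => UB_mem_le h𝒦g hasl g.2 hβ)

lemma NL_key (h𝒦g : ∀ f ∈ 𝒦, IsGamble f) (hasl : AvoidsSureLoss 𝒦 L)
    {f : X → ℝ} (hf : f ∈ 𝒦) (hfg : IsGamble (-f)) :
    NL 𝒦 L ⟨-f, hfg⟩ ≤ -(L f) := by
  refine csInf_le (UB_bddBelow h𝒦g hasl hfg) ?_
  refine ⟨1, fun _ => 1, fun _ => f, fun _ => zero_le_one, fun _ => hf, ?_⟩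
  have heq : (fun x => (-f : X → ℝ) x + ∑ _k : Fin 1, (1:ℝ) * (f x - L f)) =
      fun _ : X => -(L f) := by
    funext x
    simp only [Pi.neg_apply, Finset.sum_const, Finset.card_univ, Fintype.card_fin,
      one_smul, one_mul]
    ring
  rw [heq, sSup_range_const]

lemma NL_add (h𝒦g : ∀ f ∈ 𝒦, IsGamble f) (hasl : AvoidsSureLoss 𝒦 L)
    (x y : ↥(GambleSub X)) : NL 𝒦 L (x + y) ≤ NL 𝒦 L x + NL 𝒦 L y := by
  have hne1 : (UB 𝒦 L x.1).Nonempty := ⟨_, UB_nonempty x.1⟩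
  have hne2 : (UB 𝒦 L y.1).Nonempty := ⟨_, UB_nonempty y.1⟩
  have key : ∀ β1 ∈ UB 𝒦 L x.1, ∀ β2 ∈ UB 𝒦 L y.1, NL 𝒦 L (x + y) ≤ β1 + β2 := by
    rintro β1 ⟨n1, lam1, fs1, hlam1, hfs1, rfl⟩ β2 ⟨n2, lam2, fs2, hlam2, hfs2, rfl⟩
    have hlam : ∀ k, 0 ≤ Fin.append lam1 lam2 k := by
      refine Fin.addCases ?_ ?_ <;> intro i
      · rw [Fin.append_left]; exact hlam1 i
      · rw [Fin.append_right]; exact hlam2 i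
    have hfs : ∀ k, Fin.append fs1 fs2 k ∈ 𝒦 := by
      refine Fin.addCases ?_ ?_ <;> intro i
      · rw [Fin.append_left]; exact hfs1 i
      · rw [Fin.append_right]; exact hfs2 i
    have hmem : sSup (range (fun x' => (x + y).1 x' +
        ∑ k, (Fin.append lam1 lam2) k * ((Fin.append fs1 fs2) k x' -
          L ((Fin.append fs1 fs2) k)))) ∈ UB 𝒦 L (x + y).1 :=
      ⟨n1 + n2, _, _, hlam, hfs, rfl⟩
    have hsplit : ∀ x' : X, (x + y).1 x' +
        ∑ k, (Fin.append lam1 lam2) k * ((Fin.append fs1 fs2) k x' -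
          L ((Fin.append fs1 fs2) k)) =
        (x.1 x' + ∑ k, lam1 k * (fs1 k x' - L (fs1 k))) +
        (y.1 x' + ∑ k, lam2 k * (fs2 k x' - L (fs2 k))) := by
      intro x'
      rw [Fin.sum_univ_add]
      have e1 : ∀ i : Fin n1, (Fin.append lam1 lam2) (Fin.castAdd n2 i) *
          ((Fin.append fs1 fs2) (Fin.castAdd n2 i) x' - L ((Fin.append fs1 fs2) (Fin.castAdd n2 i)))
          = lam1 i * (fs1 i x' - L (fs1 i)) := by
        intro i; rw [Fin.append_left, Fin.append_left]
      have e2 : ∀ i : Fin n2, (Fin.append lam1 lam2) (Fin.natAdd n1 i) *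
          ((Fin.append fs1 fs2) (Fin.natAdd n1 i) x' - L ((Fin.append fs1 fs2) (Fin.natAdd n1 i)))
          = lam2 i * (fs2 i x' - L (fs2 i)) := by
        intro i; rw [Fin.append_right, Fin.append_right]
      rw [Finset.sum_congr rfl (fun i _ => e1 i), Finset.sum_congr rfl (fun i _ => e2 i)]
      have : (x + y).1 x' = x.1 x' + y.1 x' := rfl
      rw [this]; ring
    have hg1 : IsGamble (fun x' => x.1 x' + ∑ k, lam1 k * (fs1 k x' - L (fs1 k))) := by
      have := gamble_add x.2 (sfun_gamble (L := L) h𝒦g lam1 fs1 hfs1); exact this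
    have hg2 : IsGamble (fun x' => y.1 x' + ∑ k, lam2 k * (fs2 k x' - L (fs2 k))) := by
      have := gamble_add y.2 (sfun_gamble (L := L) h𝒦g lam2 fs2 hfs2); exact this
    have hle : sSup (range (fun x' => (x + y).1 x' +
        ∑ k, (Fin.append lam1 lam2) k * ((Fin.append fs1 fs2) k x' -
          L ((Fin.append fs1 fs2) k)))) ≤
        sSup (range (fun x' => x.1 x' + ∑ k, lam1 k * (fs1 k x' - L (fs1 k)))) +
        sSup (range (fun x' => y.1 x' + ∑ k, lam2 k * (fs2 k x' - L (fs2 k)))) := by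
      refine sSup_range_le (fun x' => ?_)
      rw [hsplit x']
      exact add_le_add (le_sSup_range hg1 x') (le_sSup_range hg2 x')
    exact le_trans (csInf_le (UB_bddBelow h𝒦g hasl (x + y).2) hmem) hle
  have step : ∀ β1 ∈ UB 𝒦 L x.1, NL 𝒦 L (x + y) - β1 ≤ NL 𝒦 L y :=
    fun β1 h1 => le_csInf hne2 (fun β2 h2 => by linarith [key β1 h1 β2 h2])
  have final : NL 𝒦 L (x + y) - NL 𝒦 L y ≤ NL 𝒦 L x :=
    le_csInf hne1 (fun β1 h1 => by linarith [step β1 h1])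
  linarith

lemma UB_scale_mem (h𝒦g : ∀ f ∈ 𝒦, IsGamble f) {c : ℝ} (hc : 0 < c)
    {g : X → ℝ} (hg : IsGamble g) {β : ℝ} (hβ : β ∈ UB 𝒦 L g) :
    c * β ∈ UB 𝒦 L (c • g) := by
  obtain ⟨n, lam, fs, hlam, hfs, rfl⟩ := hβ
  refine ⟨n, fun k => c * lam k, fs, fun k => mul_nonneg hc.le (hlam k), hfs, ?_⟩
  have heq : (fun x' => (c • g) x' + ∑ k, (c * lam k) * (fs k x' - L (fs k))) =
      (fun x' => c * (g x' + ∑ k, lam k * (fs k x' - L (fs k)))) := by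
    funext x'
    simp only [Pi.smul_apply, smul_eq_mul, mul_add, Finset.mul_sum, mul_assoc]
  have hgam : IsGamble (fun x' => g x' + ∑ k, lam k * (fs k x' - L (fs k))) :=
    gamble_add hg (sfun_gamble (L := L) h𝒦g lam fs hfs)
  rw [heq]
  exact (sSup_range_mul hgam hc).symm

lemma NL_hom (h𝒦g : ∀ f ∈ 𝒦, IsGamble f) (hasl : AvoidsSureLoss 𝒦 L)
    (c : ℝ) (hc : 0 < c) (x : ↥(GambleSub X)) : NL 𝒦 L (c • x) = c * NL 𝒦 L x := by
  have hcoe : (c • x).1 = c • x.1 := rfl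
  apply le_antisymm
  · have h1 : ∀ β ∈ UB 𝒦 L x.1, NL 𝒦 L (c • x) ≤ c * β := by
      intro β hβ
      have := UB_scale_mem h𝒦g hc x.2 hβ
      exact csInf_le (UB_bddBelow h𝒦g hasl (c • x).2) (by rwa [← hcoe] at this)
    have h2 : NL 𝒦 L (c • x) / c ≤ NL 𝒦 L x :=
      le_csInf ⟨_, UB_nonempty x.1⟩ (fun β hβ => by
        rw [div_le_iff₀ hc, mul_comm]; exact h1 β hβ)
    rw [div_le_iff₀ hc] at h2
    linarith [h2]
  · have h1 : ∀ γ ∈ UB 𝒦 L (c • x).1, c * NL 𝒦 L x ≤ γ := by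
      intro γ hγ
      have hmem := UB_scale_mem (c := c⁻¹) h𝒦g (by positivity) (c • x).2 hγ
      have hback : c⁻¹ • (c • x).1 = x.1 := by
        rw [hcoe, smul_smul, inv_mul_cancel₀ (ne_of_gt hc), one_smul]
      rw [hback] at hmem
      have := csInf_le (UB_bddBelow h𝒦g hasl x.2) hmem
      calc c * NL 𝒦 L x ≤ c * (c⁻¹ * γ) := by
            apply mul_le_mul_of_nonneg_left this hc.le
      _ = γ := by field_simp
    exact le_csInf ⟨_, UB_nonempty (c • x).1⟩ h1

theorem exists_Q_dominating (h𝒦g : ∀ f ∈ 𝒦, IsGamble f) (hasl : AvoidsSureLoss 𝒦 L) :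
    ∃ Q : (X → ℝ) → ℝ, IsCoherentPrevision Q ∧ ∀ f ∈ 𝒦, L f ≤ Q f := by
  classical
  set one : ↥(GambleSub X) := ⟨fun _ => 1, gamble_const 1⟩ with hone
  have hone0 : one ≠ 0 := by
    intro h
    have := congrFun (congrArg Subtype.val h) (Classical.arbitrary X)
    simpa [hone] using this
  have hN0 : (0:ℝ) ≤ NL 𝒦 L one + NL 𝒦 L (-one) := by
    have h1 := NL_add h𝒦g hasl one (-one)
    have h2 : one + (-one) = 0 := add_neg_cancel one
    rw [h2] at h1
    have h3 := sInf_le_NL h𝒦g hasl (0 : ↥(GambleSub X))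
    have h4 : sInf (range ((0 : ↥(GambleSub X)) : X → ℝ)) = 0 := sInf_range_zero
    linarith [h4 ▸ h3]
  obtain ⟨ψ, hle, hpin⟩ := hb_exists (NL 𝒦 L) (fun c hc z => NL_hom h𝒦g hasl c hc z)
    (NL_add h𝒦g hasl) one hone0 (-(NL 𝒦 L (-one))) (by linarith) (by rw [neg_neg])
  refine ⟨fun g => if hg : IsGamble g then ψ ⟨g, hg⟩ else 0, ⟨?_, ?_⟩, ?_⟩
  · intro f g hf hg
    dsimp only
    rw [dif_pos hf, dif_pos hg, dif_pos (gamble_add hf hg)]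
    have : (⟨f + g, gamble_add hf hg⟩ : ↥(GambleSub X)) = ⟨f, hf⟩ + ⟨g, hg⟩ := rfl
    rw [this, map_add]
  · intro f hf
    dsimp only
    rw [dif_pos hf]
    have h1 : ψ (-⟨f, hf⟩) ≤ NL 𝒦 L (-⟨f, hf⟩) := hle _
    have h2 : NL 𝒦 L (-⟨f, hf⟩) ≤ sSup (range (fun x => -(f x))) := by
      have := NL_le_sSup h𝒦g hasl (-⟨f, hf⟩ : ↥(GambleSub X))
      exact this
    have h3 := neg_sSup_range_neg hf
    have h4 : ψ (-⟨f, hf⟩) = -ψ ⟨f, hf⟩ := map_neg ψ _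
    linarith
  · intro f hf
    have hfg := h𝒦g f hf
    dsimp only
    rw [dif_pos hfg]
    have h1 : ψ (-⟨f, hfg⟩) ≤ NL 𝒦 L (-⟨f, hfg⟩) := hle _
    have h2 : NL 𝒦 L (-⟨f, hfg⟩) ≤ -(L f) := NL_key h𝒦g hasl hf (gamble_neg hfg)
    have h4 : ψ (-⟨f, hfg⟩) = -ψ ⟨f, hfg⟩ := map_neg ψ _
    linarith

end NatExtHB
section Attain

open Set

variable {X : Type*} [Nonempty X]

lemma MLP_zero {M' : (X → ℝ) → ℝ} (hM' : IsCoherentLowerPrevision M') : M' 0 = 0 := by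
  have := hM'.2.2 0 gamble_zero 0 le_rfl
  rwa [zero_smul, zero_mul] at this

lemma MLP_le_neg {M' : (X → ℝ) → ℝ} (hM' : IsCoherentLowerPrevision M')
    {g : X → ℝ} (hg : IsGamble g) : M' g ≤ -(M' (-g)) := by
  have h := hM'.2.1 g (-g) hg (gamble_neg hg)
  rw [add_neg_cancel, MLP_zero hM'] at h
  linarith

theorem exists_Q_attaining {M' : (X → ℝ) → ℝ}
    (hM' : IsCoherentLowerPrevision M') (h : X → ℝ) (hh : IsGamble h) :
    ∃ Q : (X → ℝ) → ℝ, IsCoherentPrevision Q ∧ (∀ g, IsGamble g → M' g ≤ Q g) ∧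
      Q h = M' h := by
  classical
  set N : ↥(GambleSub X) → ℝ := fun g => -(M' (-g.1)) with hN
  have Nhom : ∀ c : ℝ, 0 < c → ∀ x : ↥(GambleSub X), N (c • x) = c * N x := by
    intro c hc x
    have h1 : -((c • x).1) = c • (-x.1) := by
      have : (c • x).1 = c • x.1 := rfl
      rw [this, ← smul_neg]
    rw [hN]
    dsimp only
    rw [h1, hM'.2.2 (-x.1) (gamble_neg x.2) c hc.le]
    ring
  have Nadd : ∀ x y : ↥(GambleSub X), N (x + y) ≤ N x + N y := by
    intro x y
    have h1 : -((x + y).1) = (-x.1) + (-y.1) := by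
      have : (x + y).1 = x.1 + y.1 := rfl
      rw [this, neg_add]
    have h2 := hM'.2.1 (-x.1) (-y.1) (gamble_neg x.2) (gamble_neg y.2)
    rw [hN]
    dsimp only
    rw [h1]
    linarith
  have hQbuild : ∀ ψ : ↥(GambleSub X) →ₗ[ℝ] ℝ, (∀ x, ψ x ≤ N x) →
      (IsCoherentPrevision (fun g => if hg : IsGamble g then ψ ⟨g, hg⟩ else 0) ∧
       ∀ g, IsGamble g → M' g ≤ (fun g => if hg : IsGamble g then ψ ⟨g, hg⟩ else 0) g) := by
    intro ψ hle
    have hdom : ∀ g (hg : IsGamble g), M' g ≤ ψ ⟨g, hg⟩ := by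
      intro g hg
      have h1 : ψ (-⟨g, hg⟩) ≤ N (-⟨g, hg⟩) := hle _
      have h2 : N (-⟨g, hg⟩) = -(M' g) := by
        rw [hN]
        dsimp only
        have : -((-⟨g, hg⟩ : ↥(GambleSub X)).1) = g := by
          have : (-⟨g, hg⟩ : ↥(GambleSub X)).1 = -g := rfl
          rw [this, neg_neg]
        rw [this]
      have h3 : ψ (-⟨g, hg⟩) = -ψ ⟨g, hg⟩ := map_neg ψ _
      rw [h2, h3] at h1
      linarith
    refine ⟨⟨?_, ?_⟩, ?_⟩
    · intro f g hf hg
      dsimp only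
      rw [dif_pos hf, dif_pos hg, dif_pos (gamble_add hf hg)]
      have : (⟨f + g, gamble_add hf hg⟩ : ↥(GambleSub X)) = ⟨f, hf⟩ + ⟨g, hg⟩ := rfl
      rw [this, map_add]
    · intro f hf
      dsimp only
      rw [dif_pos hf]
      exact le_trans (hM'.1 f hf) (hdom f hf)
    · intro g hg
      dsimp only
      rw [dif_pos hg]
      exact hdom g hg
  by_cases h0 : h = (0 : X → ℝ)
  · set one : ↥(GambleSub X) := ⟨fun _ => 1, gamble_const 1⟩ with hone
    have hone0 : one ≠ 0 := by
      intro hcon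
      have := congrFun (congrArg Subtype.val hcon) (Classical.arbitrary X)
      simpa [hone] using this
    have hy1 : -(N (-one)) ≤ N one := by
      have := Nadd one (-one)
      rw [add_neg_cancel] at this
      have hzero : N (0 : ↥(GambleSub X)) = 0 := by
        rw [hN]; dsimp only
        have : -((0 : ↥(GambleSub X)).1) = (0 : X → ℝ) := by
          have : ((0 : ↥(GambleSub X)).1) = (0 : X → ℝ) := rfl
          rw [this, neg_zero]
        rw [this, MLP_zero hM', neg_zero]
      rw [hzero] at this
      linarith
    obtain ⟨ψ, hle, _⟩ := hb_exists N Nhom Nadd one hone0 (-(N (-one))) hy1 (by rw [neg_neg])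
    obtain ⟨hcoh, hdom⟩ := hQbuild ψ hle
    refine ⟨_, hcoh, hdom, ?_⟩
    subst h0
    show (if hg : IsGamble (0 : X → ℝ) then ψ ⟨0, hg⟩ else 0) = M' 0
    rw [dif_pos gamble_zero]
    have : (⟨(0 : X → ℝ), gamble_zero⟩ : ↥(GambleSub X)) = 0 := rfl
    rw [this, map_zero, MLP_zero hM']
  · have hne : (⟨h, hh⟩ : ↥(GambleSub X)) ≠ 0 := by
      intro hcon
      exact h0 (congrArg Subtype.val hcon)
    have hy1 : M' h ≤ N ⟨h, hh⟩ := by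
      have := MLP_le_neg hM' hh
      rw [hN]; exact this
    have hy2 : -(M' h) ≤ N (-⟨h, hh⟩) := by
      rw [hN]
      dsimp only
      have e : -((-⟨h, hh⟩ : ↥(GambleSub X)).1) = h := by
        have : (-⟨h, hh⟩ : ↥(GambleSub X)).1 = -h := rfl
        rw [this, neg_neg]
      rw [e]
    obtain ⟨ψ, hle, hpin⟩ := hb_exists N Nhom Nadd ⟨h, hh⟩ hne (M' h) hy1 hy2
    obtain ⟨hcoh, hdom⟩ := hQbuild ψ hle
    refine ⟨_, hcoh, hdom, ?_⟩
    rw [dif_pos hh]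
    exact hpin

end Attain
section Banach

open Set

theorem exists_banach_limit : ∃ B : (ℕ → ℝ) → ℝ, IsBanachLimit B := by
  classical
  set N : ↥(GambleSub ℕ) → ℝ := fun a => uplim a.1 with hN
  have Nhom : ∀ c : ℝ, 0 < c → ∀ x : ↥(GambleSub ℕ), N (c • x) = c * N x := by
    intro c hc x
    rw [hN]
    dsimp only
    have e : uplim ((c • x).1) = uplim (fun ℓ => c * x.1 ℓ) :=
      uplim_congr (fun ℓ => by
        have : (c • x).1 = c • x.1 := rfl
        rw [this]
        simp [Pi.smul_apply, smul_eq_mul])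
    rw [e, uplim_homog hc.le]
  have Nadd : ∀ x y : ↥(GambleSub ℕ), N (x + y) ≤ N x + N y := by
    intro x y
    obtain ⟨C1, hC1⟩ := isGamble_iff.1 x.2
    obtain ⟨C2, hC2⟩ := isGamble_iff.1 y.2
    have hC10 : 0 ≤ C1 := le_trans (abs_nonneg _) (hC1 0)
    have hC20 : 0 ≤ C2 := le_trans (abs_nonneg _) (hC2 0)
    have ha : ∀ ℓ, |x.1 ℓ| ≤ C1 + C2 := fun ℓ => by linarith [hC1 ℓ]
    have hb : ∀ ℓ, |y.1 ℓ| ≤ C1 + C2 := fun ℓ => by linarith [hC2 ℓ]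
    have e : uplim ((x + y).1) = uplim (fun ℓ => x.1 ℓ + y.1 ℓ) :=
      uplim_congr (fun ℓ => rfl)
    rw [hN]
    dsimp only
    rw [e]
    exact uplim_subadd ha hb
  set one : ↥(GambleSub ℕ) := ⟨fun _ => 1, gamble_const 1⟩ with hone
  have hone0 : one ≠ 0 := by
    intro hcon
    have := congrFun (congrArg Subtype.val hcon) 0
    simpa [hone] using this
  have hy1 : (1:ℝ) ≤ N one := by
    rw [hN]
    dsimp only
    have : uplim (one.1) = uplim (fun _ : ℕ => (1:ℝ)) := uplim_congr (fun _ => rfl)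
    rw [this, uplim_const]
  have hy2 : -(1:ℝ) ≤ N (-one) := by
    rw [hN]
    dsimp only
    have : uplim ((-one).1) = uplim (fun _ : ℕ => (-1:ℝ)) := uplim_congr (fun _ => rfl)
    rw [this, uplim_const]
  obtain ⟨ψ, hle, hpin⟩ := hb_exists N Nhom Nadd one hone0 1 hy1 hy2
  refine ⟨fun a => if ha : IsGamble a then ψ ⟨a, ha⟩ else 0, ⟨?_, ?_⟩, ?_⟩
  · intro f g hf hg
    dsimp only
    rw [dif_pos hf, dif_pos hg, dif_pos (gamble_add hf hg)]
    have : (⟨f + g, gamble_add hf hg⟩ : ↥(GambleSub ℕ)) = ⟨f, hf⟩ + ⟨g, hg⟩ := rfl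
    rw [this, map_add]
  · intro a ha
    dsimp only
    rw [dif_pos ha]
    have h1 : ψ (-⟨a, ha⟩) ≤ N (-⟨a, ha⟩) := hle _
    have h2 : N (-⟨a, ha⟩) ≤ -(sInf (range a)) := by
      rw [hN]
      dsimp only
      have e : uplim ((-⟨a, ha⟩ : ↥(GambleSub ℕ)).1) = uplim (fun ℓ => -(a ℓ)) :=
        uplim_congr (fun ℓ => rfl)
      rw [e]
      exact uplim_le (lo := -(sSup (range a)))
        (fun ℓ => by linarith [le_sSup_range ha ℓ])
        (fun ℓ => by linarith [sInf_range_le ha ℓ])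
    have h3 : ψ (-⟨a, ha⟩) = -ψ ⟨a, ha⟩ := map_neg ψ _
    rw [h3] at h1
    linarith
  · intro a ha
    obtain ⟨C, hC⟩ := isGamble_iff.1 ha
    have hshift : IsGamble (fun n => a (n + 1)) := isGamble_of_bound C (fun n => hC (n+1))
    dsimp only
    rw [dif_pos hshift, dif_pos ha]
    have d1 : ψ ⟨fun n => a (n+1), hshift⟩ - ψ ⟨a, ha⟩ ≤ 0 := by
      have e1 : ψ ⟨fun n => a (n+1), hshift⟩ - ψ ⟨a, ha⟩ =
          ψ (⟨fun n => a (n+1), hshift⟩ - ⟨a, ha⟩) := (map_sub ψ _ _).symm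
      have e2 : N (⟨fun n => a (n+1), hshift⟩ - ⟨a, ha⟩) ≤ 0 := by
        rw [hN]
        dsimp only
        have e : uplim ((⟨fun n => a (n+1), hshift⟩ - ⟨a, ha⟩ : ↥(GambleSub ℕ)).1) =
            uplim (fun ℓ => a (ℓ+1) - a ℓ) := uplim_congr (fun ℓ => rfl)
        rw [e]
        exact uplim_shift_sub hC
      rw [e1]
      exact le_trans (hle _) e2
    have d2 : ψ ⟨a, ha⟩ - ψ ⟨fun n => a (n+1), hshift⟩ ≤ 0 := by
      have e1 : ψ ⟨a, ha⟩ - ψ ⟨fun n => a (n+1), hshift⟩ =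
          ψ (⟨a, ha⟩ - ⟨fun n => a (n+1), hshift⟩) := (map_sub ψ _ _).symm
      have e2 : N (⟨a, ha⟩ - ⟨fun n => a (n+1), hshift⟩) ≤ 0 := by
        rw [hN]
        dsimp only
        have e : uplim ((⟨a, ha⟩ - ⟨fun n => a (n+1), hshift⟩ : ↥(GambleSub ℕ)).1) =
            uplim (fun ℓ => a ℓ - a (ℓ+1)) := uplim_congr (fun ℓ => rfl)
        rw [e]
        exact uplim_sub_shift hC
      rw [e1]
      exact le_trans (hle _) e2
    linarith

lemma banach_const {B : (ℕ → ℝ) → ℝ} (hB : IsBanachLimit B) (c : ℝ) :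
    B (fun _ => c) = c := by
  have h1 : c ≤ B (fun _ => c) := P_le_apply_bounds hB.1 (gamble_const c) (fun _ => le_rfl)
  have h2 : B (fun _ => c) ≤ c := P_le_sup hB.1 (gamble_const c) (fun _ => le_rfl)
  linarith

end Banach
section Iterates

open Set

variable {X : Type*} [Nonempty X] {T : X → X}

lemma comp_iterate_succ (f : X → ℝ) (T : X → X) (n : ℕ) :
    (f ∘ T^[n]) ∘ T = f ∘ T^[n+1] := by
  rw [Function.iterate_succ]
  rfl

lemma comp_succ_iterate (f : X → ℝ) (T : X → X) (n : ℕ) :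
    (f ∘ T) ∘ T^[n] = f ∘ T^[n+1] := by
  rw [Function.iterate_succ']
  rfl

lemma mem_iter {𝒦 : Set (X → ℝ)} (h𝒦T : ∀ f ∈ 𝒦, f ∘ T ∈ 𝒦)
    {f : X → ℝ} (hf : f ∈ 𝒦) (n : ℕ) : f ∘ T^[n] ∈ 𝒦 := by
  induction n with
  | zero => simpa using hf
  | succ n ih =>
    rw [← comp_iterate_succ]
    exact h𝒦T _ ih

lemma L_iter {𝒦 : Set (X → ℝ)} {L : (X → ℝ) → ℝ} (h𝒦T : ∀ f ∈ 𝒦, f ∘ T ∈ 𝒦)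
    (hweak : ∀ f ∈ 𝒦, L f ≤ L (f ∘ T)) {f : X → ℝ} (hf : f ∈ 𝒦) (n : ℕ) :
    L f ≤ L (f ∘ T^[n]) := by
  induction n with
  | zero => simp
  | succ n ih =>
    rw [← comp_iterate_succ]
    exact le_trans ih (hweak _ (mem_iter h𝒦T hf n))

lemma P_iter {P : (X → ℝ) → ℝ} (hPinv : ∀ f : X → ℝ, IsGamble f → P (f ∘ T) = P f)
    {f : X → ℝ} (hf : IsGamble f) (n : ℕ) : P (f ∘ T^[n]) = P f := by
  induction n with
  | zero => rfl
  | succ n ih =>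
    rw [← comp_iterate_succ]
    rw [hPinv _ (gamble_comp hf _)]
    exact ih

lemma P_sum {P : (X → ℝ) → ℝ} (hP : IsCoherentPrevision P) (m : ℕ) (g : ℕ → X → ℝ)
    (hg : ∀ i, IsGamble (g i)) :
    P (∑ i ∈ Finset.range m, g i) = ∑ i ∈ Finset.range m, P (g i) := by
  induction m with
  | zero => simpa using P_zero hP
  | succ m ih =>
    rw [Finset.sum_range_succ, Finset.sum_range_succ,
      hP.1 _ _ (gamble_sum _ _ (fun i _ => hg i)) (hg m), ih]

lemma MLP_sum_ge {M' : (X → ℝ) → ℝ} (hM' : IsCoherentLowerPrevision M') (m : ℕ)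
    (g : ℕ → X → ℝ) (hg : ∀ i, IsGamble (g i)) :
    ∑ i ∈ Finset.range m, M' (g i) ≤ M' (∑ i ∈ Finset.range m, g i) := by
  induction m with
  | zero => simpa using le_of_eq (MLP_zero hM').symm
  | succ m ih =>
    rw [Finset.sum_range_succ, Finset.sum_range_succ]
    calc ∑ i ∈ Finset.range m, M' (g i) + M' (g m)
        ≤ M' (∑ i ∈ Finset.range m, g i) + M' (g m) := by linarith
    _ ≤ _ := hM'.2.1 _ _ (gamble_sum _ _ (fun i _ => hg i)) (hg m)

lemma sum_all_eq {a : ℕ → ℝ} {c : ℝ} {m : ℕ} (h : ∀ ℓ, c ≤ a ℓ)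
    (hsum : ∑ ℓ ∈ Finset.range m, a ℓ = m * c) : ∀ ℓ < m, a ℓ = c := by
  have hz : ∑ ℓ ∈ Finset.range m, (a ℓ - c) = 0 := by
    rw [Finset.sum_sub_distrib, Finset.sum_const, Finset.card_range, hsum]
    simp
  have := (Finset.sum_eq_zero_iff_of_nonneg
    (fun i _ => by linarith [h i] : ∀ i ∈ Finset.range m, 0 ≤ a i - c)).1 hz
  intro ℓ hℓ
  have := this ℓ (Finset.mem_range.2 hℓ)
  linarith

end Iterates
section StrongInv

open Set

variable {X : Type*} [Nonempty X] {T : X → X} {M' : (X → ℝ) → ℝ}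

lemma MLP_comp_T (hM' : IsCoherentLowerPrevision M')
    (hinv : ∀ f : X → ℝ, IsGamble f → 0 ≤ M' (f - f ∘ T) ∧ 0 ≤ M' (f ∘ T - f))
    {g : X → ℝ} (hg : IsGamble g) : M' (g ∘ T) = M' g := by
  have e1 : g + (g ∘ T - g) = g ∘ T := by ring
  have e2 : g ∘ T + (g - g ∘ T) = g := by ring
  have h1 := hM'.2.1 g (g ∘ T - g) hg (gamble_sub (gamble_comp hg T) hg)
  rw [e1] at h1
  have h2 := hM'.2.1 (g ∘ T) (g - g ∘ T) (gamble_comp hg T) (gamble_sub hg (gamble_comp hg T))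
  rw [e2] at h2
  have h3 := (hinv g hg).1
  have h4 := (hinv g hg).2
  linarith

lemma MLP_iter (hM' : IsCoherentLowerPrevision M')
    (hinv : ∀ f : X → ℝ, IsGamble f → 0 ≤ M' (f - f ∘ T) ∧ 0 ≤ M' (f ∘ T - f))
    {g : X → ℝ} (hg : IsGamble g) (n : ℕ) : M' (g ∘ T^[n]) = M' g := by
  induction n with
  | zero => rfl
  | succ n ih =>
    rw [← comp_iterate_succ, MLP_comp_T hM' hinv (gamble_comp hg _), ih]

lemma MLP_sub_iter (hM' : IsCoherentLowerPrevision M')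
    (hinv : ∀ f : X → ℝ, IsGamble f → 0 ≤ M' (f - f ∘ T) ∧ 0 ≤ M' (f ∘ T - f))
    {g : X → ℝ} (hg : IsGamble g) (n : ℕ) :
    0 ≤ M' (g - g ∘ T^[n]) ∧ 0 ≤ M' (g ∘ T^[n] - g) := by
  induction n with
  | zero =>
    constructor
    · have e : g - g ∘ T^[0] = 0 := by
        show g - g = 0
        ring
      rw [e, MLP_zero hM']
    · have e : g ∘ T^[0] - g = 0 := by
        show g - g = 0
        ring
      rw [e, MLP_zero hM']
  | succ n ih =>
    constructor
    · have e : g - g ∘ T^[n+1] = (g - g ∘ T^[n]) + ((g ∘ T^[n]) - (g ∘ T^[n]) ∘ T) := by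
        rw [comp_iterate_succ]
        ring
      rw [e]
      have h1 := hM'.2.1 (g - g ∘ T^[n]) ((g ∘ T^[n]) - (g ∘ T^[n]) ∘ T)
        (gamble_sub hg (gamble_comp hg _))
        (gamble_sub (gamble_comp hg _) (gamble_comp (gamble_comp hg _) T))
      have h2 := (hinv (g ∘ T^[n]) (gamble_comp hg _)).1
      linarith [ih.1]
    · have e : g ∘ T^[n+1] - g = ((g ∘ T^[n]) ∘ T - (g ∘ T^[n])) + (g ∘ T^[n] - g) := by
        rw [comp_iterate_succ]
        ring
      rw [e]
      have h1 := hM'.2.1 ((g ∘ T^[n]) ∘ T - (g ∘ T^[n])) (g ∘ T^[n] - g)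
        (gamble_sub (gamble_comp (gamble_comp hg _) T) (gamble_comp hg _))
        (gamble_sub (gamble_comp hg _) hg)
      have h2 := (hinv (g ∘ T^[n]) (gamble_comp hg _)).2
      linarith [ih.2]

noncomputable def ANf (T : X → X) (f : X → ℝ) (N : ℕ) : X → ℝ :=
  (((N:ℝ)+1)⁻¹) • ∑ ℓ ∈ Finset.range (N+1), f ∘ T^[ℓ]

lemma ANf_gamble {f : X → ℝ} (hf : IsGamble f) (N : ℕ) : IsGamble (ANf T f N) :=
  gamble_smul _ (gamble_sum _ _ (fun ℓ _ => gamble_comp hf _))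

lemma MLP_AN (hM' : IsCoherentLowerPrevision M')
    (hinv : ∀ f : X → ℝ, IsGamble f → 0 ≤ M' (f - f ∘ T) ∧ 0 ≤ M' (f ∘ T - f))
    {f : X → ℝ} (hf : IsGamble f) (N : ℕ) : M' (ANf T f N) = M' f := by
  have hc : (0:ℝ) ≤ ((N:ℝ)+1)⁻¹ := by positivity
  have hcN : ((N:ℝ)+1)⁻¹ * ((N:ℝ)+1) = 1 := by
    field_simp
  have hsumg : IsGamble (∑ ℓ ∈ Finset.range (N+1), f ∘ T^[ℓ]) :=
    gamble_sum _ _ (fun ℓ _ => gamble_comp hf _)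
  have hhom : M' (ANf T f N) = ((N:ℝ)+1)⁻¹ * M' (∑ ℓ ∈ Finset.range (N+1), f ∘ T^[ℓ]) :=
    hM'.2.2 _ hsumg _ hc
  have hsum_ge : ((N:ℝ)+1) * M' f ≤ M' (∑ ℓ ∈ Finset.range (N+1), f ∘ T^[ℓ]) := by
    have h1 := MLP_sum_ge hM' (N+1) (fun ℓ => f ∘ T^[ℓ]) (fun ℓ => gamble_comp hf _)
    have h2 : ∑ ℓ ∈ Finset.range (N+1), M' (f ∘ T^[ℓ]) = ((N:ℝ)+1) * M' f := by
      rw [Finset.sum_congr rfl (fun ℓ _ => MLP_iter hM' hinv hf ℓ), Finset.sum_const,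
        Finset.card_range]
      push_cast
      ring
    linarith [h2 ▸ h1]
  have hge : M' f ≤ M' (ANf T f N) := by
    rw [hhom]
    calc M' f = ((N:ℝ)+1)⁻¹ * (((N:ℝ)+1) * M' f) := by
          rw [← mul_assoc, hcN, one_mul]
    _ ≤ _ := by
        apply mul_le_mul_of_nonneg_left hsum_ge hc
  have hsub : f - ANf T f N = ((N:ℝ)+1)⁻¹ • ∑ ℓ ∈ Finset.range (N+1), (f - f ∘ T^[ℓ]) := by
    funext x
    have e1 : (∑ ℓ ∈ Finset.range (N+1), (f - f ∘ T^[ℓ])) x =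
        ((N:ℝ)+1) * f x - (∑ ℓ ∈ Finset.range (N+1), f ∘ T^[ℓ]) x := by
      rw [Finset.sum_apply, Finset.sum_apply]
      simp only [Pi.sub_apply]
      rw [Finset.sum_sub_distrib, Finset.sum_const, Finset.card_range]
      push_cast
      ring
    rw [Pi.sub_apply, Pi.smul_apply, smul_eq_mul, e1]
    unfold ANf
    rw [Pi.smul_apply, smul_eq_mul]
    field_simp
  have hle : M' (ANf T f N) ≤ M' f := by
    have h0 : 0 ≤ M' (∑ ℓ ∈ Finset.range (N+1), (f - f ∘ T^[ℓ])) := by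
      have hs := MLP_sum_ge hM' (N+1) (fun ℓ => f - f ∘ T^[ℓ])
        (fun ℓ => gamble_sub hf (gamble_comp hf _))
      have hterm : ∀ ℓ ∈ Finset.range (N+1), 0 ≤ M' (f - f ∘ T^[ℓ]) :=
        fun ℓ _ => (MLP_sub_iter hM' hinv hf ℓ).1
      calc (0:ℝ) ≤ ∑ ℓ ∈ Finset.range (N+1), M' (f - f ∘ T^[ℓ]) :=
            Finset.sum_nonneg hterm
      _ ≤ _ := hs
    have h1 : 0 ≤ M' (f - ANf T f N) := by
      rw [hsub, hM'.2.2 _ (gamble_sum _ _ (fun ℓ _ => gamble_sub hf (gamble_comp hf _))) _ hc]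
      exact mul_nonneg hc h0
    have h2 := hM'.2.1 (f - ANf T f N) (ANf T f N)
      (gamble_sub hf (ANf_gamble hf N)) (ANf_gamble hf N)
    have e : f - ANf T f N + ANf T f N = f := by ring
    rw [e] at h2
    linarith
  linarith

end StrongInv
section Compactness

open Set

variable {X : Type*} [Nonempty X]

theorem key_min {T : X → X} {𝒦 : Set (X → ℝ)} {L : (X → ℝ) → ℝ} {M' : (X → ℝ) → ℝ}
    (hM' : IsCoherentLowerPrevision M')
    (hinv : ∀ f : X → ℝ, IsGamble f → 0 ≤ M' (f - f ∘ T) ∧ 0 ≤ M' (f ∘ T - f))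
    (hdom : ∀ f ∈ 𝒦, L f ≤ M' f) (h𝒦g : ∀ f ∈ 𝒦, IsGamble f)
    {f : X → ℝ} (hf : IsGamble f) :
    ∃ Q : (X → ℝ) → ℝ, (IsCoherentPrevision Q ∧ ∀ g ∈ 𝒦, L g ≤ Q g) ∧
      ∀ ℓ : ℕ, Q (f ∘ T^[ℓ]) = M' f := by
  classical
  set ι := ↥(GambleSub X) with hι
  set K : Set (ι → ℝ) :=
    Set.univ.pi (fun g : ι => Icc (sInf (range g.1)) (sSup (range g.1))) with hK
  set D : Set (ι → ℝ) :=
    {z | (∀ g h : ι, z (g + h) = z g + z h) ∧ ∀ g : ι, M' g.1 ≤ z g} with hD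
  set pin : ℕ → Set (ι → ℝ) :=
    fun N => {z | z ⟨ANf T f N, ANf_gamble hf N⟩ = M' f} with hpin
  set F : ℕ → Set (ι → ℝ) := fun N => K ∩ (D ∩ pin N) with hF
  -- basic coherence facts for elements of K ∩ D
  have hQz : ∀ z : ι → ℝ, z ∈ K → z ∈ D →
      IsCoherentPrevision (fun g => if hg : IsGamble g then z ⟨g, hg⟩ else 0) ∧
      (∀ g : X → ℝ, IsGamble g →
        M' g ≤ (fun g => if hg : IsGamble g then z ⟨g, hg⟩ else 0) g) := by
    intro z hzK hzD
    have hKb : ∀ g : ι, z g ∈ Icc (sInf (range g.1)) (sSup (range g.1)) := by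
      intro g
      exact hzK g (mem_univ g)
    constructor
    · constructor
      · intro a b ha hb
        dsimp only
        rw [dif_pos ha, dif_pos hb, dif_pos (gamble_add ha hb)]
        have e : (⟨a + b, gamble_add ha hb⟩ : ι) = ⟨a, ha⟩ + ⟨b, hb⟩ := rfl
        rw [e]
        exact hzD.1 _ _
      · intro a ha
        dsimp only
        rw [dif_pos ha]
        exact (hKb ⟨a, ha⟩).1
    · intro g hg
      dsimp only
      rw [dif_pos hg]
      exact hzD.2 ⟨g, hg⟩
  -- the key propagation: pin at N forces all coordinates up to N to equal M' f
  have hprop : ∀ z : ι → ℝ, z ∈ K → z ∈ D → ∀ N : ℕ, z ∈ pin N →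
      ∀ j < N + 1, z ⟨f ∘ T^[j], gamble_comp hf _⟩ = M' f := by
    intro z hzK hzD N hzpin
    obtain ⟨hQcoh, hQdom⟩ := hQz z hzK hzD
    set Q : (X → ℝ) → ℝ := fun g => if hg : IsGamble g then z ⟨g, hg⟩ else 0 with hQ
    have ha_ge : ∀ ℓ : ℕ, M' f ≤ Q (f ∘ T^[ℓ]) := by
      intro ℓ
      have h1 := hQdom (f ∘ T^[ℓ]) (gamble_comp hf _)
      rw [MLP_iter hM' hinv hf ℓ] at h1
      exact h1
    have hQAN : ∀ m : ℕ, Q (ANf T f m) =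
        ((m:ℝ)+1)⁻¹ * ∑ ℓ ∈ Finset.range (m+1), Q (f ∘ T^[ℓ]) := by
      intro m
      have h1 : Q (ANf T f m) = ((m:ℝ)+1)⁻¹ * Q (∑ ℓ ∈ Finset.range (m+1), f ∘ T^[ℓ]) := by
        unfold ANf
        exact P_homog hQcoh (gamble_sum _ _ (fun ℓ _ => gamble_comp hf _)) (by positivity)
      rw [h1, P_sum hQcoh (m+1) (fun ℓ => f ∘ T^[ℓ]) (fun ℓ => gamble_comp hf _)]
    have hpinQ : Q (ANf T f N) = M' f := by
      rw [hQ]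
      dsimp only
      rw [dif_pos (ANf_gamble hf N)]
      exact hzpin
    have hsum : ∑ ℓ ∈ Finset.range (N+1), Q (f ∘ T^[ℓ]) = ((N:ℝ)+1) * M' f := by
      have := hQAN N
      rw [hpinQ] at this
      have hc : ((N:ℝ)+1) ≠ 0 := by positivity
      field_simp at this
      linarith
    have hall : ∀ ℓ < N + 1, Q (f ∘ T^[ℓ]) = M' f := by
      have := sum_all_eq (a := fun ℓ => Q (f ∘ T^[ℓ])) (c := M' f) (m := N+1) ha_ge ?_
      · exact this
      · rw [hsum]; push_cast; ring
    intro j hj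
    have := hall j hj
    rw [hQ] at this
    dsimp only at this
    rw [dif_pos (gamble_comp hf _)] at this
    exact this
  -- closedness and compactness
  have hKcl : IsClosed K := isClosed_set_pi (fun g _ => isClosed_Icc)
  have hKcomp : IsCompact K := isCompact_univ_pi (fun g => isCompact_Icc)
  have hDcl : IsClosed D := by
    have : D = (⋂ g : ι, ⋂ h : ι, {z : ι → ℝ | z (g + h) = z g + z h}) ∩
        (⋂ g : ι, {z : ι → ℝ | M' g.1 ≤ z g}) := by
      ext z
      simp only [hD, mem_setOf_eq, mem_inter_iff, mem_iInter]
    rw [this]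
    refine IsClosed.inter ?_ ?_
    · exact isClosed_iInter (fun g => isClosed_iInter (fun h =>
        isClosed_eq (continuous_apply (g + h)) ((continuous_apply g).add (continuous_apply h))))
    · exact isClosed_iInter (fun g => isClosed_le continuous_const (continuous_apply _))
  have hpincl : ∀ N, IsClosed (pin N) :=
    fun N => isClosed_eq (continuous_apply _) continuous_const
  have hFcl : ∀ N, IsClosed (F N) :=
    fun N => hKcl.inter (hDcl.inter (hpincl N))
  have hFcomp : IsCompact (F 0) := hKcomp.inter_right (hDcl.inter (hpincl 0))
  -- nonemptiness
  have hFne : ∀ N, (F N).Nonempty := by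
    intro N
    obtain ⟨Q, hQcoh, hQge, hQpin⟩ := exists_Q_attaining hM' (ANf T f N) (ANf_gamble hf N)
    refine ⟨fun g : ι => Q g.1, ?_, ?_, ?_⟩
    · intro g _
      exact ⟨hQcoh.2 g.1 g.2, P_le_sup hQcoh g.2 (fun x => le_sSup_range g.2 x)⟩
    · constructor
      · intro g h
        have e : ((g + h : ι) : X → ℝ) = g.1 + h.1 := rfl
        dsimp only
        rw [e]
        exact hQcoh.1 g.1 h.1 g.2 h.2
      · intro g
        exact hQge g.1 g.2
    · show Q (ANf T f N) = M' f
      rw [hQpin, MLP_AN hM' hinv hf N]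
  -- antitone
  have hFsub : ∀ N, F (N+1) ⊆ F N := by
    intro N z hz
    obtain ⟨hzK, hzD, hzpin⟩ := hz
    refine ⟨hzK, hzD, ?_⟩
    have hall := hprop z hzK hzD (N+1) hzpin
    -- we know all coordinates j < N+2 are M' f; recover pin at N
    obtain ⟨hQcoh, hQdom⟩ := hQz z hzK hzD
    set Q : (X → ℝ) → ℝ := fun g => if hg : IsGamble g then z ⟨g, hg⟩ else 0 with hQ
    have hQj : ∀ j < N + 2, Q (f ∘ T^[j]) = M' f := by
      intro j hj
      have := hall j (by omega)
      rw [hQ]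
      dsimp only
      rw [dif_pos (gamble_comp hf _)]
      exact this
    have hQAN : Q (ANf T f N) =
        ((N:ℝ)+1)⁻¹ * ∑ ℓ ∈ Finset.range (N+1), Q (f ∘ T^[ℓ]) := by
      have h1 : Q (ANf T f N) = ((N:ℝ)+1)⁻¹ * Q (∑ ℓ ∈ Finset.range (N+1), f ∘ T^[ℓ]) := by
        unfold ANf
        exact P_homog hQcoh (gamble_sum _ _ (fun ℓ _ => gamble_comp hf _)) (by positivity)
      rw [h1, P_sum hQcoh (N+1) (fun ℓ => f ∘ T^[ℓ]) (fun ℓ => gamble_comp hf _)]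
    have hsum : ∑ ℓ ∈ Finset.range (N+1), Q (f ∘ T^[ℓ]) = ((N:ℝ)+1) * M' f := by
      rw [Finset.sum_congr rfl (fun ℓ hℓ => hQj ℓ (by
        have := Finset.mem_range.1 hℓ; omega))]
      rw [Finset.sum_const, Finset.card_range]
      push_cast
      ring
    have : Q (ANf T f N) = M' f := by
      rw [hQAN, hsum, ← mul_assoc]
      have hc : ((N:ℝ)+1) ≠ 0 := by positivity
      field_simp
    rw [hQ] at this
    dsimp only at this
    rw [dif_pos (ANf_gamble hf N)] at this
    exact this
  -- intersection nonempty
  obtain ⟨z, hz⟩ := IsCompact.nonempty_iInter_of_sequence_nonempty_isCompact_isClosed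
    F hFsub hFne hFcomp hFcl
  have hzmem : ∀ N, z ∈ F N := fun N => (mem_iInter.1 hz) N
  have hzK : z ∈ K := (hzmem 0).1
  have hzD : z ∈ D := (hzmem 0).2.1
  obtain ⟨hQcoh, hQdom⟩ := hQz z hzK hzD
  refine ⟨fun g => if hg : IsGamble g then z ⟨g, hg⟩ else 0, ⟨hQcoh, ?_⟩, ?_⟩
  · intro g hg
    exact le_trans (hdom g hg) (hQdom g (h𝒦g g hg))
  · intro ℓ
    have := hprop z hzK hzD ℓ (hzmem ℓ).2.2 ℓ (by omega)
    dsimp only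
    rw [dif_pos (gamble_comp hf _)]
    exact this

end Compactness
section Assembly

open Set

variable {X : Type*} [Nonempty X]

def Sset (T : X → X) (𝒦 : Set (X → ℝ)) (L : (X → ℝ) → ℝ) (f : X → ℝ) : Set ℝ :=
  {r : ℝ | ∃ Q : (X → ℝ) → ℝ,
    (IsCoherentPrevision Q ∧ ∀ g ∈ 𝒦, L g ≤ Q g) ∧
    r = ⨆ n : ℕ, ⨅ k : ℕ,
      (∑ ℓ ∈ Finset.range (n+1), Q (f ∘ T^[k + ℓ])) / ((n : ℝ) + 1)}

variable {T : X → X} {𝒦 : Set (X → ℝ)} {L : (X → ℝ) → ℝ}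

lemma Sset_mem_iff {f : X → ℝ} {r : ℝ} :
    r ∈ Sset T 𝒦 L f ↔ ∃ Q : (X → ℝ) → ℝ,
      (IsCoherentPrevision Q ∧ ∀ g ∈ 𝒦, L g ≤ Q g) ∧
      r = lowlim (fun ℓ => Q (f ∘ T^[ℓ])) := by
  constructor
  · rintro ⟨Q, hQ, rfl⟩
    exact ⟨Q, hQ, by exact (lowlim_eq_iSup_iInf (fun ℓ => Q (f ∘ T^[ℓ]))).symm⟩
  · rintro ⟨Q, hQ, rfl⟩
    exact ⟨Q, hQ, by exact lowlim_eq_iSup_iInf (fun ℓ => Q (f ∘ T^[ℓ]))⟩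

lemma seq_lo {Q : (X → ℝ) → ℝ} (hQ : IsCoherentPrevision Q) {f : X → ℝ}
    (hf : IsGamble f) (ℓ : ℕ) : sInf (range f) ≤ Q (f ∘ T^[ℓ]) :=
  P_le_apply_bounds hQ (gamble_comp hf _) (fun x => sInf_range_le hf (T^[ℓ] x))

lemma seq_hi {Q : (X → ℝ) → ℝ} (hQ : IsCoherentPrevision Q) {f : X → ℝ}
    (hf : IsGamble f) (ℓ : ℕ) : Q (f ∘ T^[ℓ]) ≤ sSup (range f) :=
  P_le_sup hQ (gamble_comp hf _) (fun x => le_sSup_range hf (T^[ℓ] x))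

lemma Sset_elt_lo {f : X → ℝ} (hf : IsGamble f) {r : ℝ} (hr : r ∈ Sset T 𝒦 L f) :
    sInf (range f) ≤ r := by
  obtain ⟨Q, hQ, rfl⟩ := Sset_mem_iff.1 hr
  exact le_lowlim (seq_lo hQ.1 hf) (seq_hi hQ.1 hf)

lemma Sset_nonempty (h𝒦g : ∀ f ∈ 𝒦, IsGamble f) (hasl : AvoidsSureLoss 𝒦 L)
    (f : X → ℝ) : (Sset T 𝒦 L f).Nonempty := by
  obtain ⟨Q, hQcoh, hQdom⟩ := exists_Q_dominating h𝒦g hasl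
  exact ⟨_, Sset_mem_iff.2 ⟨Q, ⟨hQcoh, hQdom⟩, rfl⟩⟩

lemma Sset_bddBelow {f : X → ℝ} (hf : IsGamble f) : BddBelow (Sset T 𝒦 L f) :=
  ⟨sInf (range f), fun _ hr => Sset_elt_lo hf hr⟩

end Assembly

theorem stmt17 (X : Type*) [Nonempty X] (T : X → X)
    (𝒦 : Set (X → ℝ)) (h𝒦g : ∀ f ∈ 𝒦, IsGamble f) (h𝒦T : ∀ f ∈ 𝒦, f ∘ T ∈ 𝒦)
    (L : (X → ℝ) → ℝ) (hasl : AvoidsSureLoss 𝒦 L)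
    (hweak : ∀ f ∈ 𝒦, L f ≤ L (f ∘ T)) :
    (∀ P : (X → ℝ) → ℝ,
      (IsCoherentPrevision P ∧ (∀ f : X → ℝ, IsGamble f → P (f ∘ T) = P f) ∧
        (∀ f ∈ 𝒦, L f ≤ P f)) ↔
      (∃ Q : (X → ℝ) → ℝ, (IsCoherentPrevision Q ∧ ∀ f ∈ 𝒦, L f ≤ Q f) ∧
        ∃ B : (ℕ → ℝ) → ℝ, IsBanachLimit B ∧
          ∀ f : X → ℝ, IsGamble f → P f = B (fun n => Q (f ∘ T^[n])))) ∧
    (∃ M : (X → ℝ) → ℝ, IsCoherentLowerPrevision M ∧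
      (∀ f : X → ℝ, IsGamble f → 0 ≤ M (f - f ∘ T) ∧ 0 ≤ M (f ∘ T - f)) ∧
      (∀ f ∈ 𝒦, L f ≤ M f) ∧
      (∀ M' : (X → ℝ) → ℝ, IsCoherentLowerPrevision M' →
        (∀ f : X → ℝ, IsGamble f → 0 ≤ M' (f - f ∘ T) ∧ 0 ≤ M' (f ∘ T - f)) →
        (∀ f ∈ 𝒦, L f ≤ M' f) →
        ∀ f : X → ℝ, IsGamble f → M f ≤ M' f) ∧
      (∀ f : X → ℝ, IsGamble f →
        M f = sInf {r : ℝ | ∃ Q : (X → ℝ) → ℝ,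
          (IsCoherentPrevision Q ∧ ∀ g ∈ 𝒦, L g ≤ Q g) ∧
          r = ⨆ n : ℕ, ⨅ k : ℕ,
            (∑ ℓ ∈ Finset.range (n+1), Q (f ∘ T^[k + ℓ])) / ((n : ℝ) + 1)})) := by
  constructor
  · -- Part 1: characterization of T-invariant dominating previsions
    intro P
    constructor
    · rintro ⟨hPcoh, hPinv, hPdom⟩
      obtain ⟨B, hB⟩ := exists_banach_limit
      refine ⟨P, ⟨hPcoh, hPdom⟩, B, hB, fun f hf => ?_⟩
      have e : (fun n : ℕ => P (f ∘ T^[n])) = fun _ : ℕ => P f :=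
        funext (fun n => P_iter hPinv hf n)
      rw [e, banach_const hB]
    · rintro ⟨Q, ⟨hQcoh, hQdom⟩, B, hB, hrep⟩
      have hseq : ∀ f : X → ℝ, IsGamble f → IsGamble (fun n : ℕ => Q (f ∘ T^[n])) := by
        intro f hf
        obtain ⟨C, hC⟩ := isGamble_iff.1 hf
        exact isGamble_of_bound C (fun n => abs_P_le hQcoh (fun x => hC (T^[n] x)))
      refine ⟨⟨?_, ?_⟩, ?_, ?_⟩
      · intro f g hf hg
        rw [hrep f hf, hrep g hg, hrep (f+g) (gamble_add hf hg)]
        have e : (fun n : ℕ => Q ((f + g) ∘ T^[n])) =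
            (fun n : ℕ => Q (f ∘ T^[n])) + (fun n : ℕ => Q (g ∘ T^[n])) := by
          funext n
          have e2 : (f + g) ∘ T^[n] = f ∘ T^[n] + g ∘ T^[n] := rfl
          rw [e2]
          exact hQcoh.1 _ _ (gamble_comp hf _) (gamble_comp hg _)
        rw [e]
        exact hB.1.1 _ _ (hseq f hf) (hseq g hg)
      · intro f hf
        rw [hrep f hf]
        exact P_le_apply_bounds hB.1 (hseq f hf) (fun n => seq_lo hQcoh hf n)
      · intro f hf
        rw [hrep f hf, hrep (f ∘ T) (gamble_comp hf T)]
        have e : (fun n : ℕ => Q ((f ∘ T) ∘ T^[n])) =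
            (fun n : ℕ => (fun m : ℕ => Q (f ∘ T^[m])) (n + 1)) := by
          funext n
          rw [comp_succ_iterate]
        rw [e]
        exact hB.2 _ (hseq f hf)
      · intro f hf
        have hfg := h𝒦g f hf
        rw [hrep f hfg]
        exact P_le_apply_bounds hB.1 (hseq f hfg) (fun n =>
          le_trans (L_iter h𝒦T hweak hf n) (hQdom _ (mem_iter h𝒦T hf n)))
  · -- Part 2: the smallest strongly T-invariant dominating lower prevision
    refine ⟨fun f => sInf (Sset T 𝒦 L f), ⟨?_, ?_, ?_⟩, ?_, ?_, ?_, fun f _ => rfl⟩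
    · -- bounded below by infimum
      intro f hf
      exact le_csInf (Sset_nonempty h𝒦g hasl f) (fun r hr => Sset_elt_lo hf hr)
    · -- superadditivity
      intro f g hf hg
      refine le_csInf (Sset_nonempty h𝒦g hasl (f + g)) (fun r hr => ?_)
      obtain ⟨Q, hQ, rfl⟩ := Sset_mem_iff.1 hr
      obtain ⟨C1, hC1⟩ := isGamble_iff.1 hf
      obtain ⟨C2, hC2⟩ := isGamble_iff.1 hg
      have hC10 : 0 ≤ C1 := le_trans (abs_nonneg _) (hC1 (Classical.arbitrary X))
      have hC20 : 0 ≤ C2 := le_trans (abs_nonneg _) (hC2 (Classical.arbitrary X))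
      have haf : ∀ ℓ : ℕ, |Q (f ∘ T^[ℓ])| ≤ C1 + C2 := by
        intro ℓ
        have := abs_P_le hQ.1 (f := f ∘ T^[ℓ]) (fun x => hC1 (T^[ℓ] x))
        linarith
      have hag : ∀ ℓ : ℕ, |Q (g ∘ T^[ℓ])| ≤ C1 + C2 := by
        intro ℓ
        have := abs_P_le hQ.1 (f := g ∘ T^[ℓ]) (fun x => hC2 (T^[ℓ] x))
        linarith
      have e : (fun ℓ : ℕ => Q ((f + g) ∘ T^[ℓ])) =
          (fun ℓ : ℕ => Q (f ∘ T^[ℓ]) + Q (g ∘ T^[ℓ])) := by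
        funext ℓ
        have e2 : (f + g) ∘ T^[ℓ] = f ∘ T^[ℓ] + g ∘ T^[ℓ] := rfl
        rw [e2]
        exact hQ.1.1 _ _ (gamble_comp hf _) (gamble_comp hg _)
      rw [e]
      have h1 := lowlim_superadd (a := fun ℓ : ℕ => Q (f ∘ T^[ℓ]))
        (b := fun ℓ : ℕ => Q (g ∘ T^[ℓ])) (lo := -(C1+C2)) (hi := C1+C2)
        (fun ℓ => (abs_le.1 (haf ℓ)).1) (fun ℓ => (abs_le.1 (haf ℓ)).2)
        (fun ℓ => (abs_le.1 (hag ℓ)).1) (fun ℓ => (abs_le.1 (hag ℓ)).2)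
      have h2 : sInf (Sset T 𝒦 L f) ≤ lowlim (fun ℓ : ℕ => Q (f ∘ T^[ℓ])) :=
        csInf_le (Sset_bddBelow hf) (Sset_mem_iff.2 ⟨Q, hQ, rfl⟩)
      have h3 : sInf (Sset T 𝒦 L g) ≤ lowlim (fun ℓ : ℕ => Q (g ∘ T^[ℓ])) :=
        csInf_le (Sset_bddBelow hg) (Sset_mem_iff.2 ⟨Q, hQ, rfl⟩)
      linarith
    · -- homogeneity
      intro f hf c hc
      rcases eq_or_lt_of_le hc with hc0 | hcpos
      · -- c = 0
        subst hc0
        rw [zero_smul, zero_mul]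
        have hz : ∀ r ∈ Sset T 𝒦 L (0 : X → ℝ), r = 0 := by
          intro r hr
          obtain ⟨Q, hQ, rfl⟩ := Sset_mem_iff.1 hr
          have e : (fun ℓ : ℕ => Q ((0 : X → ℝ) ∘ T^[ℓ])) = fun _ : ℕ => (0:ℝ) := by
            funext ℓ
            have e2 : (0 : X → ℝ) ∘ T^[ℓ] = (0 : X → ℝ) := rfl
            rw [e2, P_zero hQ.1]
          rw [e, lowlim_const]
        obtain ⟨r0, hr0⟩ := Sset_nonempty h𝒦g hasl (0 : X → ℝ)
        apply le_antisymm
        · have := csInf_le (Sset_bddBelow gamble_zero) hr0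
          rw [hz r0 hr0] at this
          exact this
        · exact le_csInf ⟨r0, hr0⟩ (fun r hr => le_of_eq (hz r hr).symm)
      · -- c > 0
        have hmap : ∀ Q : (X → ℝ) → ℝ, IsCoherentPrevision Q →
            (fun ℓ : ℕ => Q ((c • f) ∘ T^[ℓ])) =
            (fun ℓ : ℕ => c * Q (f ∘ T^[ℓ])) := by
          intro Q hQ
          funext ℓ
          have e2 : (c • f) ∘ T^[ℓ] = c • (f ∘ T^[ℓ]) := rfl
          rw [e2, P_homog hQ (gamble_comp hf _) hc]
        apply le_antisymm
        · have h1 : ∀ r ∈ Sset T 𝒦 L f, sInf (Sset T 𝒦 L (c • f)) ≤ c * r := by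
            intro r hr
            obtain ⟨Q, hQ, rfl⟩ := Sset_mem_iff.1 hr
            have hmem : c * lowlim (fun ℓ : ℕ => Q (f ∘ T^[ℓ])) ∈ Sset T 𝒦 L (c • f) := by
              refine Sset_mem_iff.2 ⟨Q, hQ, ?_⟩
              rw [hmap Q hQ.1, lowlim_smul hc]
            exact csInf_le (Sset_bddBelow (gamble_smul c hf)) hmem
          have h2 : sInf (Sset T 𝒦 L (c • f)) / c ≤ sInf (Sset T 𝒦 L f) := by
            refine le_csInf (Sset_nonempty h𝒦g hasl f) (fun r hr => ?_)
            rw [div_le_iff₀ hcpos, mul_comm]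
            exact h1 r hr
          rw [div_le_iff₀ hcpos] at h2
          linarith [h2]
        · refine le_csInf (Sset_nonempty h𝒦g hasl (c • f)) (fun s hs => ?_)
          obtain ⟨Q, hQ, rfl⟩ := Sset_mem_iff.1 hs
          rw [hmap Q hQ.1, lowlim_smul hc]
          have : sInf (Sset T 𝒦 L f) ≤ lowlim (fun ℓ : ℕ => Q (f ∘ T^[ℓ])) :=
            csInf_le (Sset_bddBelow hf) (Sset_mem_iff.2 ⟨Q, hQ, rfl⟩)
          exact mul_le_mul_of_nonneg_left this hc
    · -- strong T-invariance
      intro f hf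
      obtain ⟨C, hC⟩ := isGamble_iff.1 hf
      constructor
      · refine le_csInf (Sset_nonempty h𝒦g hasl (f - f ∘ T)) (fun r hr => ?_)
        obtain ⟨Q, hQ, rfl⟩ := Sset_mem_iff.1 hr
        have e : (fun ℓ : ℕ => Q ((f - f ∘ T) ∘ T^[ℓ])) =
            (fun ℓ : ℕ => (fun m : ℕ => Q (f ∘ T^[m])) ℓ -
              (fun m : ℕ => Q (f ∘ T^[m])) (ℓ+1)) := by
          funext ℓ
          have e1 : (f - f ∘ T) ∘ T^[ℓ] = f ∘ T^[ℓ] - f ∘ T^[ℓ+1] := by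
            rw [← comp_succ_iterate f T ℓ]
            rfl
          rw [e1, P_sub hQ.1 (gamble_comp hf _) (gamble_comp hf _)]
        rw [e]
        exact lowlim_telescope _ C (fun ℓ => abs_P_le hQ.1 (fun x => hC (T^[ℓ] x)))
      · refine le_csInf (Sset_nonempty h𝒦g hasl (f ∘ T - f)) (fun r hr => ?_)
        obtain ⟨Q, hQ, rfl⟩ := Sset_mem_iff.1 hr
        have e : (fun ℓ : ℕ => Q ((f ∘ T - f) ∘ T^[ℓ])) =
            (fun ℓ : ℕ => (fun m : ℕ => -(Q (f ∘ T^[m]))) ℓ -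
              (fun m : ℕ => -(Q (f ∘ T^[m]))) (ℓ+1)) := by
          funext ℓ
          have e1 : (f ∘ T - f) ∘ T^[ℓ] = f ∘ T^[ℓ+1] - f ∘ T^[ℓ] := by
            rw [← comp_succ_iterate f T ℓ]
            rfl
          rw [e1, P_sub hQ.1 (gamble_comp hf _) (gamble_comp hf _)]
          ring
        rw [e]
        exact lowlim_telescope _ C (fun ℓ => by
          simpa using abs_P_le hQ.1 (f := f ∘ T^[ℓ]) (fun x => hC (T^[ℓ] x)))
    · -- dominates L
      intro f hf
      have hfg := h𝒦g f hf
      refine le_csInf (Sset_nonempty h𝒦g hasl f) (fun r hr => ?_)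
      obtain ⟨Q, hQ, rfl⟩ := Sset_mem_iff.1 hr
      exact le_lowlim (lo := L f) (hi := sSup (Set.range f))
        (fun ℓ => le_trans (L_iter h𝒦T hweak hf ℓ) (hQ.2 _ (mem_iter h𝒦T hf ℓ)))
        (fun ℓ => seq_hi hQ.1 hfg ℓ)
    · -- minimality
      intro M' hM' hinv hdom f hf
      obtain ⟨Q, hQM, hconst⟩ := key_min hM' hinv hdom h𝒦g hf
      have e : (fun ℓ : ℕ => Q (f ∘ T^[ℓ])) = fun _ : ℕ => M' f :=
        funext (fun ℓ => hconst ℓ)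
      have hmem : lowlim (fun ℓ : ℕ => Q (f ∘ T^[ℓ])) ∈ Sset T 𝒦 L f :=
        Sset_mem_iff.2 ⟨Q, hQM, rfl⟩
      have := csInf_le (Sset_bddBelow hf) hmem
      rwa [e, lowlim_const] at this
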